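/- arXiv:2509.24268 — 6 statements merged into one kernel-verified Lean document; each statement's English description precedes it below -/
import Mathlib

section
/- Let 1 < p < q and α, β > 0, and define f(t) = (α + t^p)/(β + t^q)^{p/q} for t > 0. If t₀ > 0 satisfies f'(t₀) = 0, then f''(t₀) < 0; in particular every critical point of f on (0,∞) is a strict local maximum of f. -/
open Set

/-- Let `1 < p < q` and `α, β > 0`, and define
`f t = (α + t^p)/(β + t^q)^(p/q)` for `t > 0`.  If `t₀ > 0` satisfies `f'(t₀) = 0`,
then `f''(t₀) < 0`; in particular every critical point of `f` on `(0,∞)` is a strict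
local maximum of `f`. -/
theorem statement5 (p q α β : ℝ) (hp : 1 < p) (hpq : p < q) (hα : 0 < α) (hβ : 0 < β)
    (f : ℝ → ℝ) (hf : ∀ t, 0 < t → f t = (α + t ^ p) / (β + t ^ q) ^ (p / q))
    (t₀ : ℝ) (ht₀ : 0 < t₀) (hcrit : deriv f t₀ = 0) :
    deriv (deriv f) t₀ < 0 ∧
      ∃ δ > 0, ∀ t, 0 < t → t ≠ t₀ → |t - t₀| < δ → f t < f t₀ := by
  have hq0 : 0 < q := by linarith
  set φ : ℝ → ℝ := fun t => p * t ^ (p-1) * (β + t ^ q) ^ (-(p/q)-1) * (β - α * t ^ (q-p))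
    with hφdef
  -- derivative formula for the explicit function
  have key0 : ∀ t : ℝ, 0 < t →
      HasDerivAt (fun s : ℝ => (α + s ^ p) / (β + s ^ q) ^ (p / q)) (φ t) t := by
    intro t ht
    have hA : 0 < β + t ^ q := by
      have := Real.rpow_pos_of_pos ht q; linarith
    have hN : HasDerivAt (fun s : ℝ => α + s ^ p) (p * t ^ (p-1)) t := by
      simpa using (Real.hasDerivAt_rpow_const (p := p) (Or.inl ht.ne')).const_add α
    have hA' : HasDerivAt (fun s : ℝ => β + s ^ q) (q * t ^ (q-1)) t := by
      simpa using (Real.hasDerivAt_rpow_const (p := q) (Or.inl ht.ne')).const_add β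
    have hD : HasDerivAt (fun s : ℝ => (β + s ^ q) ^ (p/q))
        ((p/q) * (β + t^q) ^ (p/q - 1) * (q * t ^ (q-1))) t :=
      by have h := (Real.hasDerivAt_rpow_const (p := p/q) (Or.inl hA.ne')).comp t hA'; exact h
    have hdiv := hN.div hD (by positivity)
    refine hdiv.congr_deriv (Eq.symm ?_)
    set A := β + t ^ q with hAdef
    have hB : (0:ℝ) < A ^ (p/q) := Real.rpow_pos_of_pos hA _
    have e1 : A ^ (p/q - 1) = A ^ (p/q) / A := by
      rw [Real.rpow_sub hA, Real.rpow_one]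
    have e2 : A ^ (-(p/q) - 1) = 1 / (A ^ (p/q) * A) := by
      rw [show -(p/q) - 1 = -(p/q + 1) by ring, Real.rpow_neg hA.le, Real.rpow_add hA,
        Real.rpow_one, one_div]
    have e3 : t ^ (q-1) = t ^ (p-1) * t ^ (q-p) := by
      rw [← Real.rpow_add ht]; ring_nf
    have e4 : t ^ q = t ^ p * t ^ (q-p) := by
      rw [← Real.rpow_add ht]; ring_nf
    simp only [hφdef]
    rw [e1, e2, e3]
    rw [hAdef] at *
    field_simp
    ring_nf
    rw [e4]
    ring
  -- transfer to f
  have hfe : ∀ t : ℝ, 0 < t → HasDerivAt f (φ t) t := by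
    intro t ht
    refine (key0 t ht).congr_of_eventuallyEq ?_
    filter_upwards [Ioi_mem_nhds ht] with s hs using hf s hs
  have hderiv : ∀ t : ℝ, 0 < t → deriv f t = φ t := fun t ht => (hfe t ht).deriv
  -- positivity facts
  have hGpos : ∀ t : ℝ, 0 < t → 0 < p * t ^ (p-1) * (β + t ^ q) ^ (-(p/q)-1) := by
    intro t ht
    have hA : 0 < β + t ^ q := by
      have := Real.rpow_pos_of_pos ht q; linarith
    have h1 := Real.rpow_pos_of_pos ht (p-1)
    have h2 := Real.rpow_pos_of_pos hA (-(p/q)-1)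
    positivity
  -- critical point equation
  have hc0 : β - α * t₀ ^ (q-p) = 0 := by
    have := hderiv t₀ ht₀
    rw [hcrit] at this
    have hG := hGpos t₀ ht₀
    have : p * t₀ ^ (p-1) * (β + t₀ ^ q) ^ (-(p/q)-1) * (β - α * t₀ ^ (q-p)) = 0 := this.symm
    rcases mul_eq_zero.1 this with h | h
    · exact absurd h hG.ne'
    · exact h
  -- sign of φ
  have hsign : ∀ t : ℝ, 0 < t → (t < t₀ → 0 < φ t) ∧ (t₀ < t → φ t < 0) := by
    intro t ht
    have hβα : β = α * t₀ ^ (q-p) := by linarith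
    constructor
    · intro hlt
      have : t ^ (q-p) < t₀ ^ (q-p) :=
        Real.rpow_lt_rpow ht.le hlt (by linarith)
      have hpos : 0 < β - α * t ^ (q-p) := by
        rw [hβα]; nlinarith
      exact mul_pos (hGpos t ht) hpos
    · intro hlt
      have : t₀ ^ (q-p) < t ^ (q-p) :=
        Real.rpow_lt_rpow ht₀.le hlt (by linarith)
      have hneg : β - α * t ^ (q-p) < 0 := by
        rw [hβα]; nlinarith
      exact mul_neg_of_pos_of_neg (hGpos t ht) hneg
  constructor
  · -- second derivative
    have hEq : deriv f =ᶠ[nhds t₀] φ := by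
      filter_upwards [Ioi_mem_nhds ht₀] with s hs using hderiv s hs
    rw [hEq.deriv_eq]
    -- φ = G * h
    have hA : 0 < β + t₀ ^ q := by
      have := Real.rpow_pos_of_pos ht₀ q; linarith
    have hGd : DifferentiableAt ℝ (fun t : ℝ => p * t ^ (p-1) * (β + t ^ q) ^ (-(p/q)-1)) t₀ := by
      have h1 : DifferentiableAt ℝ (fun t : ℝ => t ^ (p-1)) t₀ :=
        (Real.hasDerivAt_rpow_const (p := p-1) (Or.inl ht₀.ne')).differentiableAt
      have h2 : DifferentiableAt ℝ (fun t : ℝ => (β + t ^ q) ^ (-(p/q)-1)) t₀ := by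
        have hq' : HasDerivAt (fun s : ℝ => β + s ^ q) (q * t₀ ^ (q-1)) t₀ := by
          simpa using (Real.hasDerivAt_rpow_const (p := q) (Or.inl ht₀.ne')).const_add β
        exact ((Real.hasDerivAt_rpow_const (p := -(p/q)-1) (Or.inl hA.ne')).comp t₀
          hq').differentiableAt
      exact (h1.const_mul p).mul h2
    have hhd : HasDerivAt (fun t : ℝ => β - α * t ^ (q-p))
        (-(α * ((q-p) * t₀ ^ (q-p-1)))) t₀ := by
      simpa using (((Real.hasDerivAt_rpow_const (p := q-p)
        (Or.inl ht₀.ne')).const_mul α).const_sub β)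
    have hφd : HasDerivAt φ
        (deriv (fun t : ℝ => p * t ^ (p-1) * (β + t ^ q) ^ (-(p/q)-1)) t₀ * (β - α * t₀ ^ (q-p))
          + (p * t₀ ^ (p-1) * (β + t₀ ^ q) ^ (-(p/q)-1)) * (-(α * ((q-p) * t₀ ^ (q-p-1))))) t₀ :=
      hGd.hasDerivAt.mul hhd
    rw [hφd.deriv, hc0, mul_zero, zero_add]
    have h3 := Real.rpow_pos_of_pos ht₀ (q-p-1)
    have := hGpos t₀ ht₀
    have hqp : 0 < q - p := by linarith
    have : 0 < α * ((q-p) * t₀ ^ (q-p-1)) := by positivity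
    nlinarith [hGpos t₀ ht₀]
  · -- strict local max
    refine ⟨t₀, ht₀, fun t ht htne hdist => ?_⟩
    have hmono : StrictMonoOn f (Ioc 0 t₀) := by
      apply strictMonoOn_of_deriv_pos (convex_Ioc 0 t₀)
      · intro x hx
        exact ((hfe x hx.1).differentiableAt.continuousAt).continuousWithinAt
      · intro x hx
        rw [interior_Ioc] at hx
        rw [hderiv x hx.1]
        exact ((hsign x hx.1).1 hx.2)
    have hanti : StrictAntiOn f (Ici t₀) := by
      apply strictAntiOn_of_deriv_neg (convex_Ici t₀)
      · intro x hx
        exact ((hfe x (lt_of_lt_of_le ht₀ hx)).differentiableAt.continuousAt).continuousWithinAt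
      · intro x hx
        rw [interior_Ici] at hx
        have hx0 : 0 < x := ht₀.trans hx
        rw [hderiv x hx0]
        exact (hsign x hx0).2 hx
    rcases lt_or_gt_of_ne htne with h | h
    · exact hmono ⟨ht, h.le⟩ ⟨ht₀, le_refl _⟩ h
    · exact hanti (show t₀ ∈ Ici t₀ from le_refl t₀) (show t ∈ Ici t₀ from h.le) h
end

section
/- Let 1 < p < q and let k, l ≥ 0 be integers with k + l ≥ 2. Define H on (0,∞)^k × (0,∞)^l by H(a,b) = (Σ_{i=1}^k a_i^p + (1/2)Σ_{j=1}^l b_j^p) / (Σ_{i=1}^k a_i^q + (1/2)Σ_{j=1}^l b_j^q)^{p/q}. Then at every point (a,b) with all coordinates positive: (a) if ∂H/∂a_i(a,b) = 0 then ∂²H/∂a_i²(a,b) < 0; (b) if ∂H/∂b_j(a,b) = 0 then ∂²H/∂b_j²(a,b) < 0; (c) if ∇H(a,b) = 0 then ⟨ξ, ∇²H(a,b)·ξ⟩ < 0 for every nonzero vector ξ ∈ ℝ^{k+l} that is not parallel to (a,b). -/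
open Set

/-- The balance function
`H(a,b) = (Σ aᵢ^p + ½ Σ bⱼ^p) / (Σ aᵢ^q + ½ Σ bⱼ^q)^{p/q}`. -/
noncomputable def Hfun (p q : ℝ) {k l : ℕ} (a : Fin k → ℝ) (b : Fin l → ℝ) : ℝ :=
  ((∑ i, a i ^ p) + (1 / 2) * ∑ j, b j ^ p) /
    ((∑ i, a i ^ q) + (1 / 2) * ∑ j, b j ^ q) ^ (p / q)



open Real Filter

lemma prod_form_hasDerivAt (r : ℝ) {N D n1 d1 : ℝ → ℝ} {t : ℝ}
    (hN : HasDerivAt N (n1 t) t) (hD : HasDerivAt D (d1 t) t) (hDpos : 0 < D t) :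
    HasDerivAt (fun s => N s / D s ^ r)
      (n1 t * D t ^ (-r) - r * N t * d1 t * D t ^ (-r - 1)) t := by
  have hDne : D t ≠ 0 := ne_of_gt hDpos
  have hpow : HasDerivAt (fun s => D s ^ r) (d1 t * r * D t ^ (r - 1)) t :=
    hD.rpow_const (Or.inl hDne)
  have hne : D t ^ r ≠ 0 := (Real.rpow_pos_of_pos hDpos r).ne'
  have h := hN.div hpow hne
  refine h.congr_deriv ?_
  rw [show (-r - 1 : ℝ) = (-r) - 1 by ring, Real.rpow_sub hDpos, Real.rpow_sub hDpos,
    Real.rpow_neg hDpos.le, Real.rpow_one]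
  field_simp

lemma G_hasDerivAt (r : ℝ) {N D n1 d1 : ℝ → ℝ} {n2 d2 : ℝ} {t : ℝ}
    (hN : HasDerivAt N (n1 t) t) (hD : HasDerivAt D (d1 t) t)
    (hn1 : HasDerivAt n1 n2 t) (hd1 : HasDerivAt d1 d2 t) (hDpos : 0 < D t) :
    HasDerivAt (fun s => n1 s * D s ^ (-r) - r * N s * d1 s * D s ^ (-r - 1))
      (n2 * D t ^ (-r) - 2*r*n1 t*d1 t*D t ^ (-r-1) - r*N t*d2*D t ^ (-r-1)
        + r*(r+1)*N t*(d1 t)^2*D t ^ (-r-2)) t := by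
  have hDne : D t ≠ 0 := ne_of_gt hDpos
  have h1 : HasDerivAt (fun s => D s ^ (-r)) (d1 t * (-r) * D t ^ (-r - 1)) t :=
    hD.rpow_const (Or.inl hDne)
  have h2 : HasDerivAt (fun s => D s ^ (-r - 1)) (d1 t * (-r - 1) * D t ^ (-r - 1 - 1)) t :=
    hD.rpow_const (Or.inl hDne)
  have hA : HasDerivAt (fun s => n1 s * D s ^ (-r))
      (n2 * D t ^ (-r) + n1 t * (d1 t * (-r) * D t ^ (-r - 1))) t := hn1.mul h1
  have hB : HasDerivAt (fun s => r * N s * d1 s * D s ^ (-r - 1))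
      (((r * n1 t) * d1 t + (r * N t) * d2) * D t ^ (-r - 1)
        + (r * N t * d1 t) * (d1 t * (-r - 1) * D t ^ (-r - 1 - 1))) t :=
    (((hN.const_mul r).mul hd1).mul h2)
  have h := hA.sub hB
  refine h.congr_deriv ?_
  rw [show (-r - 1 - 1 : ℝ) = -r - 2 by ring]
  ring

lemma second_deriv_formula (r : ℝ) {N D n1 d1 : ℝ → ℝ} {n2 d2 t0 : ℝ} {U : Set ℝ}
    (hU : IsOpen U) (ht0 : t0 ∈ U)
    (hN : ∀ t ∈ U, HasDerivAt N (n1 t) t) (hD : ∀ t ∈ U, HasDerivAt D (d1 t) t)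
    (hDpos : ∀ t ∈ U, 0 < D t)
    (hn1 : HasDerivAt n1 n2 t0) (hd1 : HasDerivAt d1 d2 t0) :
    deriv (fun s => N s / D s ^ r) t0
        = n1 t0 * D t0 ^ (-r) - r * N t0 * d1 t0 * D t0 ^ (-r-1) ∧
      deriv (deriv (fun s => N s / D s ^ r)) t0
        = n2 * D t0 ^ (-r) - 2*r*n1 t0*d1 t0*D t0 ^ (-r-1) - r*N t0*d2*D t0 ^ (-r-1)
          + r*(r+1)*N t0*(d1 t0)^2*D t0 ^ (-r-2) := by
  have hd : ∀ t ∈ U, deriv (fun s => N s / D s ^ r) t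
      = n1 t * D t ^ (-r) - r * N t * d1 t * D t ^ (-r - 1) :=
    fun t ht => (prod_form_hasDerivAt r (hN t ht) (hD t ht) (hDpos t ht)).deriv
  refine ⟨hd t0 ht0, ?_⟩
  have hev : deriv (fun s => N s / D s ^ r)
      =ᶠ[nhds t0] (fun t => n1 t * D t ^ (-r) - r * N t * d1 t * D t ^ (-r - 1)) :=
    Filter.eventuallyEq_of_mem (hU.mem_nhds ht0) hd
  rw [hev.deriv_eq]
  exact (G_hasDerivAt r (hN t0 ht0) (hD t0 ht0) hn1 hd1 (hDpos t0 ht0)).deriv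

set_option maxHeartbeats 1000000 in
lemma single_aux (p q w P Q t0 : ℝ) (hp : 1 < p) (hpq : p < q) (hw : 0 < w)
    (hP : 0 ≤ P) (hQ : 0 < Q) (ht0 : 0 < t0)
    (hcrit : deriv (fun t => (w * t ^ p + P) / (w * t ^ q + Q) ^ (p/q)) t0 = 0) :
    t0 ^ p * Q = P * t0 ^ q ∧
    deriv (deriv (fun t => (w * t ^ p + P) / (w * t ^ q + Q) ^ (p/q))) t0 < 0 := by
  have hq : (0:ℝ) < q := by linarith
  have hqne : q ≠ 0 := hq.ne'
  have htne : t0 ≠ 0 := ht0.ne'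
  have hN : ∀ t ∈ Set.Ioi (0:ℝ), HasDerivAt (fun t => w * t ^ p + P)
      ((fun t => w * (p * t ^ (p - 1))) t) t := by
    intro t ht
    exact ((Real.hasDerivAt_rpow_const (Or.inl (ne_of_gt ht))).const_mul w).add_const P
  have hD : ∀ t ∈ Set.Ioi (0:ℝ), HasDerivAt (fun t => w * t ^ q + Q)
      ((fun t => w * (q * t ^ (q - 1))) t) t := by
    intro t ht
    exact ((Real.hasDerivAt_rpow_const (Or.inl (ne_of_gt ht))).const_mul w).add_const Q
  have hDpos : ∀ t ∈ Set.Ioi (0:ℝ), 0 < w * t ^ q + Q := by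
    intro t ht
    have : 0 < t ^ q := Real.rpow_pos_of_pos ht q
    positivity
  have hn1 : HasDerivAt (fun t => w * (p * t ^ (p - 1))) (w * (p * ((p-1) * t0 ^ (p - 2)))) t0 := by
    have h := ((Real.hasDerivAt_rpow_const (p := p - 1) (Or.inl htne)).const_mul p).const_mul w
    rw [show p - 1 - 1 = p - 2 by ring] at h
    exact h
  have hd1 : HasDerivAt (fun t => w * (q * t ^ (q - 1))) (w * (q * ((q-1) * t0 ^ (q - 2)))) t0 := by
    have h := ((Real.hasDerivAt_rpow_const (p := q - 1) (Or.inl htne)).const_mul q).const_mul w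
    rw [show q - 1 - 1 = q - 2 by ring] at h
    exact h
  obtain ⟨h1, h2⟩ := second_deriv_formula (p/q)
    (N := fun t => w * t ^ p + P) (D := fun t => w * t ^ q + Q)
    (n1 := fun t => w * (p * t ^ (p - 1))) (d1 := fun t => w * (q * t ^ (q - 1)))
    isOpen_Ioi ht0 hN hD hDpos hn1 hd1

  set A := t0 ^ p with hA
  set B := t0 ^ q with hB
  have hApos : 0 < A := Real.rpow_pos_of_pos ht0 p
  have hBpos : 0 < B := Real.rpow_pos_of_pos ht0 q
  have hA1 : t0 ^ (p - 1) = A / t0 := by rw [Real.rpow_sub ht0, Real.rpow_one]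
  have hB1 : t0 ^ (q - 1) = B / t0 := by rw [Real.rpow_sub ht0, Real.rpow_one]
  have hA2 : t0 ^ (p - 2) = A / t0 / t0 := by
    rw [show p - 2 = p - 1 - 1 by ring, Real.rpow_sub ht0, Real.rpow_sub ht0, Real.rpow_one]
  have hB2 : t0 ^ (q - 2) = B / t0 / t0 := by
    rw [show q - 2 = q - 1 - 1 by ring, Real.rpow_sub ht0, Real.rpow_sub ht0, Real.rpow_one]
  rw [hA1, hB1] at h1
  rw [hA1, hB1, hA2, hB2] at h2
  have hDtpos : 0 < w * B + Q := by positivity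
  have hDtne : w * B + Q ≠ 0 := hDtpos.ne'
  set K := (w * B + Q) ^ (-(p/q)) with hK
  have hKpos : 0 < K := Real.rpow_pos_of_pos hDtpos _
  have hKne : K ≠ 0 := hKpos.ne'
  have hKm1 : (w * B + Q) ^ (-(p/q) - 1) = K / (w * B + Q) := by
    rw [hK, Real.rpow_sub hDtpos, Real.rpow_one]
  have hKm2 : (w * B + Q) ^ (-(p/q) - 2) = K / (w * B + Q) / (w * B + Q) := by
    rw [hK, show -(p/q) - 2 = -(p/q) - 1 - 1 by ring, Real.rpow_sub hDtpos,
      Real.rpow_sub hDtpos, Real.rpow_one]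
  rw [hKm1] at h1
  rw [hKm1, hKm2] at h2
  rw [h1] at hcrit
  have h3 : (w * (p * (A / t0)) - p/q * (w * A + P) * (w * (q * (B / t0))) / (w * B + Q)) * K
      = 0 := by linear_combination hcrit
  have h4 : w * (p * (A / t0)) - p/q * (w * A + P) * (w * (q * (B / t0))) / (w * B + Q) = 0 := by
    rcases mul_eq_zero.mp h3 with h | h
    · exact h
    · exact absurd h hKne
  have h5 : w * p * q * t0 * (A * Q - P * B) = 0 := by
    field_simp at h4
    linear_combination q * t0 * h4
  have hwpqt : w * p * q * t0 ≠ 0 := by positivity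
  have hcrit2 : A * Q = P * B := by
    rcases mul_eq_zero.mp h5 with h | h
    · exact absurd h hwpqt
    · linarith
  refine ⟨hcrit2, ?_⟩
  rw [h2]
  have hPval : P = A * Q / B := by field_simp; linarith
  rw [hPval]
  have hqp : (0:ℝ) < q - p := by linarith
  have key : w * (p * ((p-1) * (A / t0 / t0))) * K
      - 2*(p/q)*(w * (p * (A / t0)))*(w * (q * (B / t0)))*(K / (w * B + Q))
      - (p/q)*(w * A + A * Q / B)*(w * (q * ((q-1) * (B / t0 / t0))))*(K / (w * B + Q))
      + (p/q)*((p/q)+1)*(w * A + A * Q / B)*(w * (q * (B / t0)))^2*(K / (w * B + Q) / (w * B + Q))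
      = -(w * A * (w*B+Q) * p * (q - p) * Q * K) / (t0 * t0 * (w*B+Q) * (w*B+Q)) := by
    field_simp
    ring
  rw [key]
  have hnum : 0 < w * A * (w*B+Q) * p * (q - p) * Q * K := by positivity
  have hden : 0 < t0 * t0 * (w*B+Q) * (w*B+Q) := by positivity
  rw [neg_div]
  exact neg_lt_zero.mpr (div_pos hnum hden)

lemma sum_update_rpow {k : ℕ} (a : Fin k → ℝ) (i : Fin k) (r t : ℝ) :
    ∑ i', (Function.update a i t i') ^ r
      = t ^ r + ∑ i' ∈ Finset.univ.erase i, (a i') ^ r := by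
  rw [← Finset.add_sum_erase _ (fun i' => (Function.update a i t i') ^ r) (Finset.mem_univ i)]
  congr 1
  · rw [Function.update_self]
  · exact Finset.sum_congr rfl fun x hx => by
      rw [Function.update_of_ne (Finset.ne_of_mem_erase hx)]

lemma Hfun_update_a (p q : ℝ) {k l : ℕ} (a : Fin k → ℝ) (b : Fin l → ℝ) (i : Fin k) :
    (fun t => Hfun p q (Function.update a i t) b)
      = fun t => (1 * t ^ p + ((∑ i' ∈ Finset.univ.erase i, (a i') ^ p) + (1/2) * ∑ j, b j ^ p))
          / (1 * t ^ q + ((∑ i' ∈ Finset.univ.erase i, (a i') ^ q) + (1/2) * ∑ j, b j ^ q)) ^ (p/q) := by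
  funext t
  unfold Hfun
  rw [sum_update_rpow, sum_update_rpow]
  congr 1
  · ring
  · congr 1
    ring

lemma Hfun_update_b (p q : ℝ) {k l : ℕ} (a : Fin k → ℝ) (b : Fin l → ℝ) (j : Fin l) :
    (fun t => Hfun p q a (Function.update b j t))
      = fun t => ((1/2) * t ^ p + ((∑ i, (a i) ^ p) + (1/2) * ∑ j' ∈ Finset.univ.erase j, (b j') ^ p))
          / ((1/2) * t ^ q + ((∑ i, (a i) ^ q) + (1/2) * ∑ j' ∈ Finset.univ.erase j, (b j') ^ q)) ^ (p/q) := by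
  funext t
  unfold Hfun
  rw [sum_update_rpow, sum_update_rpow]
  congr 1
  · ring
  · congr 1
    ring

section parts
variable (p q : ℝ) (hp : 1 < p) (hpq : p < q)
    (k l : ℕ) (hkl : 2 ≤ k + l)
    (a : Fin k → ℝ) (b : Fin l → ℝ)
    (ha : ∀ i, 0 < a i) (hb : ∀ j, 0 < b j)

-- nonneg of weighted power sums
lemma sum_rpow_nonneg {n : ℕ} (f : Fin n → ℝ) (hf : ∀ i, 0 < f i) (r : ℝ)
    (s : Finset (Fin n)) : 0 ≤ ∑ x ∈ s, (f x) ^ r :=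
  Finset.sum_nonneg fun x _ => (Real.rpow_pos_of_pos (hf x) r).le

include hp hpq hkl ha hb in
lemma partA (i : Fin k)
    (hcrit : deriv (fun t => Hfun p q (Function.update a i t) b) (a i) = 0) :
    (a i) ^ p * ((∑ i' ∈ Finset.univ.erase i, (a i') ^ q) + (1/2) * ∑ j, b j ^ q)
      = ((∑ i' ∈ Finset.univ.erase i, (a i') ^ p) + (1/2) * ∑ j, b j ^ p) * (a i) ^ q ∧
    deriv (deriv (fun t => Hfun p q (Function.update a i t) b)) (a i) < 0 := by
  rw [Hfun_update_a] at hcrit ⊢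
  have hQ : 0 < (∑ i' ∈ Finset.univ.erase i, (a i') ^ q) + (1/2) * ∑ j, b j ^ q := by
    by_cases hl : 0 < l
    · have h2 : 0 < ∑ j, b j ^ q := Finset.sum_pos
        (fun j _ => Real.rpow_pos_of_pos (hb j) q)
        (@Finset.univ_nonempty (Fin l) _ ⟨⟨0, hl⟩⟩)
      have h1 := sum_rpow_nonneg a ha q (Finset.univ.erase i)
      linarith
    · have hk2 : 2 ≤ k := by omega
      have hne : (Finset.univ.erase i).Nonempty := by
        rw [← Finset.card_pos, Finset.card_erase_of_mem (Finset.mem_univ i),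
          Finset.card_univ, Fintype.card_fin]
        omega
      have h1 : 0 < ∑ i' ∈ Finset.univ.erase i, (a i') ^ q :=
        Finset.sum_pos (fun x _ => Real.rpow_pos_of_pos (ha x) q) hne
      have h2 := sum_rpow_nonneg b hb q Finset.univ
      linarith
  have hP : 0 ≤ (∑ i' ∈ Finset.univ.erase i, (a i') ^ p) + (1/2) * ∑ j, b j ^ p := by
    have h1 := sum_rpow_nonneg a ha p (Finset.univ.erase i)
    have h2 := sum_rpow_nonneg b hb p Finset.univ
    linarith
  exact single_aux p q 1 _ _ (a i) hp hpq one_pos hP hQ (ha i) hcrit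

include hp hpq hkl ha hb in
lemma partB (j : Fin l)
    (hcrit : deriv (fun t => Hfun p q a (Function.update b j t)) (b j) = 0) :
    (b j) ^ p * ((∑ i, (a i) ^ q) + (1/2) * ∑ j' ∈ Finset.univ.erase j, (b j') ^ q)
      = ((∑ i, (a i) ^ p) + (1/2) * ∑ j' ∈ Finset.univ.erase j, (b j') ^ p) * (b j) ^ q ∧
    deriv (deriv (fun t => Hfun p q a (Function.update b j t))) (b j) < 0 := by
  rw [Hfun_update_b] at hcrit ⊢
  have hQ : 0 < (∑ i, (a i) ^ q) + (1/2) * ∑ j' ∈ Finset.univ.erase j, (b j') ^ q := by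
    by_cases hk : 0 < k
    · have h1 : 0 < ∑ i, (a i) ^ q := Finset.sum_pos
        (fun x _ => Real.rpow_pos_of_pos (ha x) q)
        (@Finset.univ_nonempty (Fin k) _ ⟨⟨0, hk⟩⟩)
      have h2 := sum_rpow_nonneg b hb q (Finset.univ.erase j)
      linarith
    · have hne : (Finset.univ.erase j).Nonempty := by
        rw [← Finset.card_pos, Finset.card_erase_of_mem (Finset.mem_univ j),
          Finset.card_univ, Fintype.card_fin]
        omega
      have h2 : 0 < ∑ j' ∈ Finset.univ.erase j, (b j') ^ q :=
        Finset.sum_pos (fun x _ => Real.rpow_pos_of_pos (hb x) q) hne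
      have h1 := sum_rpow_nonneg a ha q Finset.univ
      linarith
  have hP : 0 ≤ (∑ i, (a i) ^ p) + (1/2) * ∑ j' ∈ Finset.univ.erase j, (b j') ^ p := by
    have h1 := sum_rpow_nonneg a ha p Finset.univ
    have h2 := sum_rpow_nonneg b hb p (Finset.univ.erase j)
    linarith
  exact single_aux p q (1/2) _ _ (b j) hp hpq (by norm_num) hP hQ (hb j) hcrit

end parts

lemma sum_sq_dev {n : ℕ} (f : Fin n → ℝ) (μ : ℝ) :
    ∑ i, (f i - μ)^2 = (∑ i, (f i)^2) - 2*μ*(∑ i, f i) + (n:ℝ)*μ^2 := by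
  have h : ∀ i : Fin n, (f i - μ)^2 = (f i)^2 - 2*μ*(f i) + μ^2 := fun i => by ring
  simp_rw [h]
  rw [Finset.sum_add_distrib, Finset.sum_sub_distrib, ← Finset.mul_sum, Finset.sum_const,
    Finset.card_univ, Fintype.card_fin, nsmul_eq_mul]

lemma eq_of_rpow_eq {x y e : ℝ} (hx : 0 < x) (hy : 0 < y) (he : 0 < e)
    (h : x ^ e = y ^ e) : x = y := by
  rcases lt_trichotomy x y with hlt | heq | hgt
  · exact absurd h (ne_of_lt (Real.rpow_lt_rpow hx.le hlt he))
  · exact heq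
  · exact absurd h.symm (ne_of_lt (Real.rpow_lt_rpow hy.le hgt he))

set_option maxHeartbeats 2000000 in

set_option maxHeartbeats 2000000 in
lemma partC (p q : ℝ) (hp : 1 < p) (hpq : p < q) (k l : ℕ) (hkl : 2 ≤ k + l)
    (a : Fin k → ℝ) (b : Fin l → ℝ) (ha : ∀ i, 0 < a i) (hb : ∀ j, 0 < b j)
    (hcA : ∀ i, deriv (fun t => Hfun p q (Function.update a i t) b) (a i) = 0)
    (hcB : ∀ j, deriv (fun t => Hfun p q a (Function.update b j t)) (b j) = 0)
    (ξa : Fin k → ℝ) (ξb : Fin l → ℝ)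
    (hξ : ¬(ξa = 0 ∧ ξb = 0))
    (hpar : ¬(∃ c : ℝ, ξa = c • a ∧ ξb = c • b)) :
    deriv (deriv (fun t => Hfun p q (fun i => a i + t * ξa i) (fun j => b j + t * ξb j))) 0
      < 0 := by
  have hq : (0:ℝ) < q := by linarith
  have hqne : q ≠ 0 := hq.ne'
  -- Step 1: all coordinates are equal
  have hrelA : ∀ i, (a i)^p * ((∑ i', (a i')^q) + (1/2) * ∑ j, (b j)^q)
      = ((∑ i', (a i')^p) + (1/2) * ∑ j, (b j)^p) * (a i)^q := by
    intro i
    have h := (partA p q hp hpq k l hkl a b ha hb i (hcA i)).1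
    have hsp : (∑ i', (a i')^p) = (a i)^p + ∑ i' ∈ Finset.univ.erase i, (a i')^p :=
      (Finset.add_sum_erase _ _ (Finset.mem_univ i)).symm
    have hsq : (∑ i', (a i')^q) = (a i)^q + ∑ i' ∈ Finset.univ.erase i, (a i')^q :=
      (Finset.add_sum_erase _ _ (Finset.mem_univ i)).symm
    rw [hsp, hsq]
    linear_combination h
  have hrelB : ∀ j, (b j)^p * ((∑ i', (a i')^q) + (1/2) * ∑ j', (b j')^q)
      = ((∑ i', (a i')^p) + (1/2) * ∑ j', (b j')^p) * (b j)^q := by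
    intro j
    have h := (partB p q hp hpq k l hkl a b ha hb j (hcB j)).1
    have hsp : (∑ j', (b j')^p) = (b j)^p + ∑ j' ∈ Finset.univ.erase j, (b j')^p :=
      (Finset.add_sum_erase _ _ (Finset.mem_univ j)).symm
    have hsq : (∑ j', (b j')^q) = (b j)^q + ∑ j' ∈ Finset.univ.erase j, (b j')^q :=
      (Finset.add_sum_erase _ _ (Finset.mem_univ j)).symm
    rw [hsp, hsq]
    linear_combination h
  have hSppos : 0 < (∑ i', (a i')^p) + (1/2) * ∑ j, (b j)^p := by
    by_cases hk : 0 < k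
    · have h1 : 0 < ∑ i', (a i')^p := Finset.sum_pos
        (fun x _ => Real.rpow_pos_of_pos (ha x) p) (@Finset.univ_nonempty (Fin k) _ ⟨⟨0, hk⟩⟩)
      have h2 : 0 ≤ ∑ j, (b j)^p :=
        Finset.sum_nonneg fun x _ => (Real.rpow_pos_of_pos (hb x) p).le
      linarith
    · have hl : 0 < l := by omega
      have h2 : 0 < ∑ j, (b j)^p := Finset.sum_pos
        (fun x _ => Real.rpow_pos_of_pos (hb x) p) (@Finset.univ_nonempty (Fin l) _ ⟨⟨0, hl⟩⟩)
      have h1 : 0 ≤ ∑ i', (a i')^p :=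
        Finset.sum_nonneg fun x _ => (Real.rpow_pos_of_pos (ha x) p).le
      linarith
  -- any two coordinates satisfying the relation are equal
  have hkey : ∀ x y : ℝ, 0 < x → 0 < y →
      x^p * ((∑ i', (a i')^q) + (1/2) * ∑ j, (b j)^q)
        = ((∑ i', (a i')^p) + (1/2) * ∑ j, (b j)^p) * x^q →
      y^p * ((∑ i', (a i')^q) + (1/2) * ∑ j, (b j)^q)
        = ((∑ i', (a i')^p) + (1/2) * ∑ j, (b j)^p) * y^q →
      x = y := by
    intro x y hx hy h1 h2
    have hxp : 0 < x^p := Real.rpow_pos_of_pos hx p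
    have hyp : 0 < y^p := Real.rpow_pos_of_pos hy p
    have hxq : 0 < x^q := Real.rpow_pos_of_pos hx q
    have hyq : 0 < y^q := Real.rpow_pos_of_pos hy q
    have h3 : x^q * y^p = x^p * y^q := by
      have h5 : ((∑ i', (a i')^p) + (1/2) * ∑ j, (b j)^p) * (x^q * y^p)
          = ((∑ i', (a i')^p) + (1/2) * ∑ j, (b j)^p) * (x^p * y^q) := by
        linear_combination x^p * h2 - y^p * h1
      exact mul_left_cancel₀ hSppos.ne' h5
    have h4 : x ^ (q - p) = y ^ (q - p) := by
      rw [Real.rpow_sub hx, Real.rpow_sub hy]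
      field_simp
      linear_combination h3
    exact eq_of_rpow_eq hx hy (by linarith) h4
  obtain ⟨c, hc, hac, hbc⟩ : ∃ c : ℝ, 0 < c ∧ (∀ i, a i = c) ∧ (∀ j, b j = c) := by
    by_cases hk : 0 < k
    · exact ⟨a ⟨0, hk⟩, ha _, fun i => hkey _ _ (ha i) (ha _) (hrelA i) (hrelA _),
        fun j => hkey _ _ (hb j) (ha _) (hrelB j) (hrelA _)⟩
    · have hl : 0 < l := by omega
      exact ⟨b ⟨0, hl⟩, hb _, fun i => hkey _ _ (ha i) (hb _) (hrelA i) (hrelB _),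
        fun j => hkey _ _ (hb j) (hb _) (hrelB j) (hrelB _)⟩
  -- Step 2: second derivative formula along the line
  simp only [Hfun]
  set U : Set ℝ := {t : ℝ | (∀ i, 0 < a i + t * ξa i) ∧ (∀ j, 0 < b j + t * ξb j)} with hUdef
  have hUmem : ∀ t : ℝ, t ∈ U ↔ ((∀ i, 0 < a i + t * ξa i) ∧ (∀ j, 0 < b j + t * ξb j)) := by
    intro t; rw [hUdef]; rfl
  have hU : IsOpen U := by
    have hrw : U = (⋂ i, {t : ℝ | 0 < a i + t * ξa i}) ∩ (⋂ j, {t : ℝ | 0 < b j + t * ξb j}) := by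
      ext t
      simp [hUmem, Set.mem_iInter]
    rw [hrw]
    exact (isOpen_iInter_of_finite fun i =>
        isOpen_lt continuous_const (by fun_prop)).inter
      (isOpen_iInter_of_finite fun j => isOpen_lt continuous_const (by fun_prop))
  have h0U : (0:ℝ) ∈ U := by
    rw [hUmem]
    exact ⟨fun i => by simpa using ha i, fun j => by simpa using hb j⟩
  have hN : ∀ t ∈ U, HasDerivAt
      (fun t => (∑ i, (a i + t * ξa i) ^ p) + (1/2) * ∑ j, (b j + t * ξb j) ^ p)
      ((fun t => (∑ i, ξa i * p * (a i + t * ξa i) ^ (p-1))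
        + (1/2) * ∑ j, ξb j * p * (b j + t * ξb j) ^ (p-1)) t) t := by
    intro t ht
    rw [hUmem] at ht
    have h1 : ∀ i ∈ Finset.univ, HasDerivAt (fun t => (a i + t * ξa i) ^ p)
        (ξa i * p * (a i + t * ξa i) ^ (p-1)) t := fun i _ =>
      (((hasDerivAt_mul_const (ξa i)).const_add (a i)).rpow_const (Or.inl (ne_of_gt (ht.1 i))))
    have h2 : ∀ j ∈ Finset.univ, HasDerivAt (fun t => (b j + t * ξb j) ^ p)
        (ξb j * p * (b j + t * ξb j) ^ (p-1)) t := fun j _ =>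
      (((hasDerivAt_mul_const (ξb j)).const_add (b j)).rpow_const (Or.inl (ne_of_gt (ht.2 j))))
    exact (HasDerivAt.fun_sum h1).add ((HasDerivAt.fun_sum h2).const_mul (1/2))
  have hD : ∀ t ∈ U, HasDerivAt
      (fun t => (∑ i, (a i + t * ξa i) ^ q) + (1/2) * ∑ j, (b j + t * ξb j) ^ q)
      ((fun t => (∑ i, ξa i * q * (a i + t * ξa i) ^ (q-1))
        + (1/2) * ∑ j, ξb j * q * (b j + t * ξb j) ^ (q-1)) t) t := by
    intro t ht
    rw [hUmem] at ht
    have h1 : ∀ i ∈ Finset.univ, HasDerivAt (fun t => (a i + t * ξa i) ^ q)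
        (ξa i * q * (a i + t * ξa i) ^ (q-1)) t := fun i _ =>
      (((hasDerivAt_mul_const (ξa i)).const_add (a i)).rpow_const (Or.inl (ne_of_gt (ht.1 i))))
    have h2 : ∀ j ∈ Finset.univ, HasDerivAt (fun t => (b j + t * ξb j) ^ q)
        (ξb j * q * (b j + t * ξb j) ^ (q-1)) t := fun j _ =>
      (((hasDerivAt_mul_const (ξb j)).const_add (b j)).rpow_const (Or.inl (ne_of_gt (ht.2 j))))
    exact (HasDerivAt.fun_sum h1).add ((HasDerivAt.fun_sum h2).const_mul (1/2))
  have hDpos : ∀ t ∈ U, 0 <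
      (fun t => (∑ i, (a i + t * ξa i) ^ q) + (1/2) * ∑ j, (b j + t * ξb j) ^ q) t := by
    intro t ht
    rw [hUmem] at ht
    by_cases hk : 0 < k
    · have h1 : 0 < ∑ i, (a i + t * ξa i) ^ q := Finset.sum_pos
        (fun x _ => Real.rpow_pos_of_pos (ht.1 x) q) (@Finset.univ_nonempty (Fin k) _ ⟨⟨0, hk⟩⟩)
      have h2 : 0 ≤ ∑ j, (b j + t * ξb j) ^ q :=
        Finset.sum_nonneg fun x _ => (Real.rpow_pos_of_pos (ht.2 x) q).le
      simp only
      linarith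
    · have hl : 0 < l := by omega
      have h2 : 0 < ∑ j, (b j + t * ξb j) ^ q := Finset.sum_pos
        (fun x _ => Real.rpow_pos_of_pos (ht.2 x) q) (@Finset.univ_nonempty (Fin l) _ ⟨⟨0, hl⟩⟩)
      have h1 : 0 ≤ ∑ i, (a i + t * ξa i) ^ q :=
        Finset.sum_nonneg fun x _ => (Real.rpow_pos_of_pos (ht.1 x) q).le
      simp only
      linarith
  have hn1 : HasDerivAt
      (fun t => (∑ i, ξa i * p * (a i + t * ξa i) ^ (p-1))
        + (1/2) * ∑ j, ξb j * p * (b j + t * ξb j) ^ (p-1))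
      ((∑ i, ξa i * p * (ξa i * (p-1) * (a i + 0 * ξa i) ^ (p-1-1)))
        + (1/2) * ∑ j, ξb j * p * (ξb j * (p-1) * (b j + 0 * ξb j) ^ (p-1-1))) 0 := by
    have h1 : ∀ i ∈ Finset.univ, HasDerivAt (fun t => ξa i * p * (a i + t * ξa i) ^ (p-1))
        (ξa i * p * (ξa i * (p-1) * (a i + 0 * ξa i) ^ (p-1-1))) 0 := fun i _ =>
      ((((hasDerivAt_mul_const (ξa i)).const_add (a i)).rpow_const
        (Or.inl (by simpa using (ha i).ne'))).const_mul (ξa i * p))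
    have h2 : ∀ j ∈ Finset.univ, HasDerivAt (fun t => ξb j * p * (b j + t * ξb j) ^ (p-1))
        (ξb j * p * (ξb j * (p-1) * (b j + 0 * ξb j) ^ (p-1-1))) 0 := fun j _ =>
      ((((hasDerivAt_mul_const (ξb j)).const_add (b j)).rpow_const
        (Or.inl (by simpa using (hb j).ne'))).const_mul (ξb j * p))
    exact (HasDerivAt.fun_sum h1).add ((HasDerivAt.fun_sum h2).const_mul (1/2))
  have hd1 : HasDerivAt
      (fun t => (∑ i, ξa i * q * (a i + t * ξa i) ^ (q-1))
        + (1/2) * ∑ j, ξb j * q * (b j + t * ξb j) ^ (q-1))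
      ((∑ i, ξa i * q * (ξa i * (q-1) * (a i + 0 * ξa i) ^ (q-1-1)))
        + (1/2) * ∑ j, ξb j * q * (ξb j * (q-1) * (b j + 0 * ξb j) ^ (q-1-1))) 0 := by
    have h1 : ∀ i ∈ Finset.univ, HasDerivAt (fun t => ξa i * q * (a i + t * ξa i) ^ (q-1))
        (ξa i * q * (ξa i * (q-1) * (a i + 0 * ξa i) ^ (q-1-1))) 0 := fun i _ =>
      ((((hasDerivAt_mul_const (ξa i)).const_add (a i)).rpow_const
        (Or.inl (by simpa using (ha i).ne'))).const_mul (ξa i * q))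
    have h2 : ∀ j ∈ Finset.univ, HasDerivAt (fun t => ξb j * q * (b j + t * ξb j) ^ (q-1))
        (ξb j * q * (ξb j * (q-1) * (b j + 0 * ξb j) ^ (q-1-1))) 0 := fun j _ =>
      ((((hasDerivAt_mul_const (ξb j)).const_add (b j)).rpow_const
        (Or.inl (by simpa using (hb j).ne'))).const_mul (ξb j * q))
    exact (HasDerivAt.fun_sum h1).add ((HasDerivAt.fun_sum h2).const_mul (1/2))
  obtain ⟨h1, h2⟩ := second_deriv_formula (p/q) hU h0U hN hD hDpos hn1 hd1
  rw [h2]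
  rw [show a = fun _ => c from funext hac, show b = fun _ => c from funext hbc]
  simp only [zero_mul, add_zero]
  -- evaluate the sums
  have esum : ∀ (n:ℕ) (r:ℝ), (∑ _x : Fin n, c ^ r) = (n:ℝ) * c ^ r := fun n r => by
    rw [Finset.sum_const, Finset.card_univ, Fintype.card_fin, nsmul_eq_mul]
  have e1 : ∀ (n:ℕ) (f : Fin n → ℝ) (r:ℝ),
      (∑ x, f x * r * c ^ (r-1)) = r * c ^ (r-1) * ∑ x, f x := by
    intro n f r
    rw [Finset.mul_sum]
    exact Finset.sum_congr rfl fun x _ => by ring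
  have e2 : ∀ (n:ℕ) (f : Fin n → ℝ) (r:ℝ),
      (∑ x, f x * r * (f x * (r-1) * c ^ (r-1-1)))
        = r * (r-1) * c ^ (r-1-1) * ∑ x, (f x)^2 := by
    intro n f r
    rw [Finset.mul_sum]
    exact Finset.sum_congr rfl fun x _ => by ring
  rw [esum k p, esum l p, esum k q, esum l q, e1 k ξa p, e1 l ξb p, e1 k ξa q, e1 l ξb q,
    e2 k ξa p, e2 l ξb p, e2 k ξa q, e2 l ξb q]
  have hcp1 : c ^ (p-1) = c ^ p / c := by rw [Real.rpow_sub hc, Real.rpow_one]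
  have hcq1 : c ^ (q-1) = c ^ q / c := by rw [Real.rpow_sub hc, Real.rpow_one]
  have hcp2 : c ^ (p-1-1) = c ^ p / c / c := by
    rw [Real.rpow_sub hc, Real.rpow_sub hc, Real.rpow_one]
  have hcq2 : c ^ (q-1-1) = c ^ q / c / c := by
    rw [Real.rpow_sub hc, Real.rpow_sub hc, Real.rpow_one]
  rw [hcp1, hcq1, hcp2, hcq2]
  set m : ℝ := (k:ℝ) + (1/2) * (l:ℝ) with hm
  have hk0 : (0:ℝ) ≤ (k:ℝ) := Nat.cast_nonneg k
  have hl0 : (0:ℝ) ≤ (l:ℝ) := Nat.cast_nonneg l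
  have hklr : (2:ℝ) ≤ (k:ℝ) + (l:ℝ) := by exact_mod_cast hkl
  have hmpos : 0 < m := by rw [hm]; linarith
  rw [show ((k:ℝ) * c ^ p + 1/2 * ((l:ℝ) * c ^ p)) = m * c ^ p from by rw [hm]; ring,
      show ((k:ℝ) * c ^ q + 1/2 * ((l:ℝ) * c ^ q)) = m * c ^ q from by rw [hm]; ring]
  set X := c ^ p with hX
  set Y := c ^ q with hY
  have hXpos : 0 < X := Real.rpow_pos_of_pos hc p
  have hYpos : 0 < Y := Real.rpow_pos_of_pos hc q
  have hDv : 0 < m * Y := by positivity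
  set K := (m * Y) ^ (-(p/q)) with hK
  have hKpos : 0 < K := Real.rpow_pos_of_pos hDv _
  have hKm1 : (m * Y) ^ (-(p/q) - 1) = K / (m * Y) := by
    rw [hK, Real.rpow_sub hDv, Real.rpow_one]
  have hKm2 : (m * Y) ^ (-(p/q) - 2) = K / (m * Y) / (m * Y) := by
    rw [hK, show -(p/q) - 2 = -(p/q) - 1 - 1 by ring, Real.rpow_sub hDv, Real.rpow_sub hDv,
      Real.rpow_one]
  rw [hKm1, hKm2]
  set Sa := ∑ x, ξa x with hSa
  set Sb := ∑ x, ξb x with hSb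
  set Ta := ∑ x, (ξa x)^2 with hTa
  set Tb := ∑ x, (ξb x)^2 with hTb
  -- strict Cauchy–Schwarz
  have hCS : (Sa + 1/2 * Sb)^2 < m * (Ta + 1/2 * Tb) := by
    set μ := (Sa + 1/2 * Sb) / m with hμ
    have hTnnA : 0 ≤ ∑ x, (ξa x - μ)^2 := Finset.sum_nonneg fun x _ => sq_nonneg _
    have hTnnB : 0 ≤ ∑ x, (ξb x - μ)^2 := Finset.sum_nonneg fun x _ => sq_nonneg _
    have hTval : (∑ x, (ξa x - μ)^2) + 1/2 * ∑ x, (ξb x - μ)^2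
        = (Ta + 1/2*Tb) - 2*μ*(Sa + 1/2*Sb) + m*μ^2 := by
      rw [sum_sq_dev, sum_sq_dev, ← hSa, ← hSb, ← hTa, ← hTb, hm]
      ring
    have hTpos : 0 < (∑ x, (ξa x - μ)^2) + 1/2 * ∑ x, (ξb x - μ)^2 := by
      rcases (by linarith : 0 ≤ (∑ x, (ξa x - μ)^2) + 1/2 * ∑ x, (ξb x - μ)^2).lt_or_eq
        with h | h
      · exact h
      · exfalso
        have hA0 : ∑ x, (ξa x - μ)^2 = 0 := by linarith
        have hB0 : ∑ x, (ξb x - μ)^2 = 0 := by linarith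
        have hAeq : ∀ x, ξa x = μ := fun x => by
          have h6 := (Finset.sum_eq_zero_iff_of_nonneg
            (fun x _ => sq_nonneg (ξa x - μ))).mp hA0 x (Finset.mem_univ x)
          have := sq_eq_zero_iff.mp h6
          linarith
        have hBeq : ∀ x, ξb x = μ := fun x => by
          have h6 := (Finset.sum_eq_zero_iff_of_nonneg
            (fun x _ => sq_nonneg (ξb x - μ))).mp hB0 x (Finset.mem_univ x)
          have := sq_eq_zero_iff.mp h6
          linarith
        by_cases hμ0 : μ = 0
        · exact hξ ⟨funext fun x => by rw [hAeq x, hμ0]; rfl,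
            funext fun x => by rw [hBeq x, hμ0]; rfl⟩
        · refine hpar ⟨μ / c, funext fun x => ?_, funext fun x => ?_⟩
          · rw [Pi.smul_apply, smul_eq_mul, hac x, hAeq x]; field_simp
          · rw [Pi.smul_apply, smul_eq_mul, hbc x, hBeq x]; field_simp
    have h6 : m * ((∑ x, (ξa x - μ)^2) + 1/2 * ∑ x, (ξb x - μ)^2)
        = m*(Ta + 1/2*Tb) - (Sa + 1/2*Sb)^2 := by
      rw [hTval, hμ]
      field_simp
      ring
    have h7 := mul_pos hmpos hTpos
    linarith
  have key : (p * (p - 1) * (X / c / c) * Ta + 1 / 2 * (p * (p - 1) * (X / c / c) * Tb)) * K -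
          2 * (p / q) * (p * (X / c) * Sa + 1 / 2 * (p * (X / c) * Sb)) *
              (q * (Y / c) * Sa + 1 / 2 * (q * (Y / c) * Sb)) *
            (K / (m * Y)) -
        p / q * (m * X) * (q * (q - 1) * (Y / c / c) * Ta + 1 / 2 * (q * (q - 1) * (Y / c / c) * Tb))
            * (K / (m * Y)) +
      p / q * (p / q + 1) * (m * X) * (q * (Y / c) * Sa + 1 / 2 * (q * (Y / c) * Sb)) ^ 2
            * (K / (m * Y) / (m * Y))
      = -(p * (q - p) * X * K * (m * (Ta + 1/2 * Tb) - (Sa + 1/2 * Sb)^2)) / (c * c * m) := by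
    field_simp
    ring
  rw [key]
  have hqp : (0:ℝ) < q - p := by linarith
  have h8 : 0 < m * (Ta + 1/2 * Tb) - (Sa + 1/2 * Sb)^2 := by linarith
  have hnum : 0 < p * (q - p) * X * K * (m * (Ta + 1/2 * Tb) - (Sa + 1/2 * Sb)^2) := by
    positivity
  rw [neg_div]
  exact neg_lt_zero.mpr (div_pos hnum (by positivity))

/-- Let `1 < p < q` and `k + l ≥ 2`.  At every point `(a,b)` with all
coordinates positive:
(a) if `∂H/∂aᵢ = 0` then `∂²H/∂aᵢ² < 0`;
(b) if `∂H/∂bⱼ = 0` then `∂²H/∂bⱼ² < 0`;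
(c) if `∇H(a,b) = 0` then `⟨ξ, ∇²H(a,b)·ξ⟩ < 0` for every nonzero `ξ` not parallel
to `(a,b)` (the Hessian quadratic form being expressed as the second derivative of
`t ↦ H((a,b) + t·ξ)` at `t = 0`). -/
theorem statement6 (p q : ℝ) (hp : 1 < p) (hpq : p < q)
    (k l : ℕ) (hkl : 2 ≤ k + l)
    (a : Fin k → ℝ) (b : Fin l → ℝ)
    (ha : ∀ i, 0 < a i) (hb : ∀ j, 0 < b j) :
    ((∀ i : Fin k,
        deriv (fun t => Hfun p q (Function.update a i t) b) (a i) = 0 →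
        deriv (deriv (fun t => Hfun p q (Function.update a i t) b)) (a i) < 0) ∧
     (∀ j : Fin l,
        deriv (fun t => Hfun p q a (Function.update b j t)) (b j) = 0 →
        deriv (deriv (fun t => Hfun p q a (Function.update b j t))) (b j) < 0) ∧
     (((∀ i : Fin k, deriv (fun t => Hfun p q (Function.update a i t) b) (a i) = 0) ∧
       (∀ j : Fin l, deriv (fun t => Hfun p q a (Function.update b j t)) (b j) = 0)) →
       ∀ (ξa : Fin k → ℝ) (ξb : Fin l → ℝ),
         ¬(ξa = 0 ∧ ξb = 0) →
         ¬(∃ c : ℝ, ξa = c • a ∧ ξb = c • b) →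
         deriv (deriv (fun t => Hfun p q (fun i => a i + t * ξa i) (fun j => b j + t * ξb j)))
           0 < 0)) := by
  refine ⟨fun i hcrit => (partA p q hp hpq k l hkl a b ha hb i hcrit).2,
    fun j hcrit => (partB p q hp hpq k l hkl a b ha hb j hcrit).2,
    fun hcrits ξa ξb h1 h2 =>
      partC p q hp hpq k l hkl a b ha hb hcrits.1 hcrits.2 ξa ξb h1 h2⟩
end

section
/- Let n ≥ 1, let 1 < p < q, and let α, β ≥ 0. Let E ⊆ F ⊆ ℝⁿ be measurable sets and let u : ℝⁿ → ℝ be locally Lipschitz with ∫_F(|Du|^p + |u|^p) dx < ∞ and ∫_F|u|^q dx < ∞. Set A = α + ∫_E(|Du|^p + |u|^p) dx and B = β + ∫_E|u|^q dx, and assume A > 0 and B > 0. If |u(x)|^{q−p} ≤ qB/(pA) for almost every x ∈ F∖E, then (α + ∫_F(|Du|^p + |u|^p) dx)/(β + ∫_F|u|^q dx)^{p/q} ≥ A/B^{p/q}; that is, the quotient h(D) = (α + ∫_D(|Du|^p+|u|^p))/(β + ∫_D|u|^q)^{p/q} does not decrease when the domain is enlarged from E to F, provided u is sufficiently small on the added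 region. -/
open MeasureTheory Set

/-- monotonicity of the quotient
`h(D) = (α + ∫_D(|Du|^p+|u|^p))/(β + ∫_D|u|^q)^{p/q}` under enlargement of the
domain from `E` to `F`, provided `u` is sufficiently small on the added region:
if `|u|^{q−p} ≤ qB/(pA)` a.e. on `F∖E`, then `h(F) ≥ h(E)`. -/
theorem statement8 (n : ℕ) (hn : 1 ≤ n) (p q α β : ℝ) (hp : 1 < p) (hpq : p < q)
    (hα : 0 ≤ α) (hβ : 0 ≤ β)
    (E F : Set (EuclideanSpace ℝ (Fin n))) (hEF : E ⊆ F)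
    (hE : MeasurableSet E) (hF : MeasurableSet F)
    (u : EuclideanSpace ℝ (Fin n) → ℝ) (hu : LocallyLipschitz u)
    (hint1 : IntegrableOn (fun x => ‖gradient u x‖ ^ p + |u x| ^ p) F)
    (hint2 : IntegrableOn (fun x => |u x| ^ q) F)
    (A B : ℝ)
    (hA : A = α + ∫ x in E, (‖gradient u x‖ ^ p + |u x| ^ p))
    (hB : B = β + ∫ x in E, |u x| ^ q)
    (hA0 : 0 < A) (hB0 : 0 < B)
    (hsmall : ∀ᵐ x ∂(volume.restrict (F \ E)), |u x| ^ (q - p) ≤ q * B / (p * A)) :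
    A / B ^ (p / q) ≤
      (α + ∫ x in F, (‖gradient u x‖ ^ p + |u x| ^ p)) /
        (β + ∫ x in F, |u x| ^ q) ^ (p / q) := by
  have hp0 : (0:ℝ) < p := by linarith
  have hq0 : (0:ℝ) < q := by linarith
  set C := q * B / (p * A) with hC
  have hC0 : 0 < C := by positivity
  -- integrability of pieces
  have hint1' : IntegrableOn (fun x => ‖gradient u x‖ ^ p + |u x| ^ p) (F \ E) :=
    hint1.mono_set diff_subset
  have hint2' : IntegrableOn (fun x => |u x| ^ q) (F \ E) := hint2.mono_set diff_subset
  have hcont : Continuous fun x => |u x| ^ p :=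
    (hu.continuous.abs).rpow_const (fun x => Or.inr hp0.le)
  have hintp : IntegrableOn (fun x => |u x| ^ p) (F \ E) := by
    refine (Integrable.mono hint1' hcont.aestronglyMeasurable ?_)
    filter_upwards with x
    have h1 : 0 ≤ ‖gradient u x‖ ^ p := Real.rpow_nonneg (norm_nonneg _) p
    have h2 : 0 ≤ |u x| ^ p := Real.rpow_nonneg (abs_nonneg _) p
    rw [Real.norm_eq_abs, Real.norm_eq_abs, abs_of_nonneg h2,
      abs_of_nonneg (add_nonneg h1 h2)]
    linarith
  set a := ∫ x in F \ E, (‖gradient u x‖ ^ p + |u x| ^ p) with ha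
  set b := ∫ x in F \ E, |u x| ^ q with hb
  have ha0 : 0 ≤ a := by
    apply setIntegral_nonneg (hF.diff hE)
    intro x _
    have h1 : 0 ≤ ‖gradient u x‖ ^ p := Real.rpow_nonneg (norm_nonneg _) p
    have h2 : 0 ≤ |u x| ^ p := Real.rpow_nonneg (abs_nonneg _) p
    linarith
  have hb0 : 0 ≤ b := setIntegral_nonneg (hF.diff hE)
    (fun x _ => Real.rpow_nonneg (abs_nonneg _) q)
  -- key bound: b ≤ C * a
  have hbCa : b ≤ C * a := by
    have h1 : b ≤ ∫ x in F \ E, C * |u x| ^ p := by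
      apply integral_mono_ae hint2' (hintp.const_mul C)
      filter_upwards [hsmall] with x hx
      have : |u x| ^ q = |u x| ^ (q - p) * |u x| ^ p := by
        rw [← Real.rpow_add' (abs_nonneg _) (by linarith)]
        ring_nf
      rw [this]
      exact mul_le_mul_of_nonneg_right hx (Real.rpow_nonneg (abs_nonneg _) p)
    have h2 : ∫ x in F \ E, C * |u x| ^ p ≤ C * a := by
      rw [integral_const_mul]
      apply mul_le_mul_of_nonneg_left _ hC0.le
      apply integral_mono_ae hintp hint1'
      filter_upwards with x
      have h1 : 0 ≤ ‖gradient u x‖ ^ p := Real.rpow_nonneg (norm_nonneg _) p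
      linarith
    linarith
  -- split integrals over F
  have hsplit1 : ∫ x in F, (‖gradient u x‖ ^ p + |u x| ^ p)
      = (∫ x in E, (‖gradient u x‖ ^ p + |u x| ^ p)) + a := by
    rw [ha, ← setIntegral_union (disjoint_sdiff_right) (hF.diff hE)
      (hint1.mono_set hEF) hint1', union_diff_cancel hEF]
  have hsplit2 : ∫ x in F, |u x| ^ q = (∫ x in E, |u x| ^ q) + b := by
    rw [hb, ← setIntegral_union (disjoint_sdiff_right) (hF.diff hE)
      (hint2.mono_set hEF) hint2', union_diff_cancel hEF]
  rw [hsplit1, hsplit2, ← add_assoc, ← add_assoc, ← hA, ← hB]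
  -- now pure algebra: A/B^{p/q} ≤ (A+a)/(B+b)^{p/q}
  have hBb : 0 < B + b := by linarith
  have hBpq : (0:ℝ) < B ^ (p / q) := Real.rpow_pos_of_pos hB0 _
  have hBbpq : (0:ℝ) < (B + b) ^ (p / q) := Real.rpow_pos_of_pos hBb _
  rw [div_le_div_iff₀ hBpq hBbpq]
  have hfac : (B + b) ^ (p / q) = B ^ (p / q) * (1 + b / B) ^ (p / q) := by
    rw [← Real.mul_rpow hB0.le (by positivity)]
    congr 1
    field_simp
  rw [hfac]
  have hbern : (1 + b / B) ^ (p / q) ≤ 1 + (p / q) * (b / B) :=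
    rpow_one_add_le_one_add_mul_self (by linarith [div_nonneg hb0 hB0.le]) (by positivity)
      (by rw [div_le_one hq0]; linarith)
  have key : A * (1 + p / q * (b / B)) ≤ A + a := by
    have : p * A * b ≤ q * B * a := by
      rw [hC, div_mul_eq_mul_div, le_div_iff₀ (by positivity)] at hbCa
      linarith [hbCa]
    have hq' : 0 < q * B := by positivity
    have heq : A * (1 + p / q * (b / B)) = A + (p * A * b) / (q * B) := by
      field_simp
    rw [heq, add_le_add_iff_left, div_le_iff₀ hq']
    nlinarith
  calc A * (B ^ (p / q) * (1 + b / B) ^ (p / q))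
      ≤ A * (B ^ (p / q) * (1 + p / q * (b / B))) := by
        apply mul_le_mul_of_nonneg_left _ hA0.le
        exact mul_le_mul_of_nonneg_left hbern hBpq.le
    _ = A * (1 + p / q * (b / B)) * B ^ (p / q) := by ring
    _ ≤ (A + a) * B ^ (p / q) := mul_le_mul_of_nonneg_right key hBpq.le
end

section
/- Let n ≥ 2 be an integer and p > 1. Let R₀ ≥ 0 and let w ∈ C²((R₀,∞)) satisfy w(r) > 0 and w'(r) < 0 for all r > R₀, together with the differential inequality |w'(r)|^{p−2}·(w''(r) + ((n−1)/(p−1))·w'(r)/r) ≥ w(r)^{p−1}/p for all r > R₀. Then the function ψ(r) = |w'(r)|^p − w(r)^p/p satisfies ψ'(r) ≤ −(p(n−1)/((p−1)r))·|w'(r)|^p ≤ 0 for all r > R₀; in particular ψ is nonincreasing on (R₀,∞). -/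
open Set

/-- Let `n ≥ 2`, `p > 1`, `R₀ ≥ 0` and let `w ∈ C²((R₀,∞))` satisfy
`w > 0`, `w' < 0` on `(R₀,∞)` and the differential inequality
`|w'|^{p−2}·(w'' + ((n−1)/(p−1))·w'/r) ≥ w^{p−1}/p`.  Then
`ψ(r) = |w'(r)|^p − w(r)^p/p` satisfies
`ψ'(r) ≤ −(p(n−1)/((p−1)r))·|w'(r)|^p ≤ 0` for all `r > R₀`;
in particular `ψ` is nonincreasing on `(R₀,∞)`. -/
theorem statement9 (n : ℕ) (hn : 2 ≤ n) (p : ℝ) (hp : 1 < p) (R₀ : ℝ) (hR₀ : 0 ≤ R₀)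
    (w w' w'' : ℝ → ℝ)
    (hd1 : ∀ r, R₀ < r → HasDerivAt w (w' r) r)
    (hd2 : ∀ r, R₀ < r → HasDerivAt w' (w'' r) r)
    (hpos : ∀ r, R₀ < r → 0 < w r)
    (hneg : ∀ r, R₀ < r → w' r < 0)
    (hode : ∀ r, R₀ < r →
      w r ^ (p - 1) / p ≤ |w' r| ^ (p - 2) * (w'' r + ((n : ℝ) - 1) / (p - 1) * (w' r / r))) :
    (∀ r, R₀ < r →
        deriv (fun s => |w' s| ^ p - w s ^ p / p) r ≤
          -(p * ((n : ℝ) - 1) / ((p - 1) * r)) * |w' r| ^ p ∧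
        -(p * ((n : ℝ) - 1) / ((p - 1) * r)) * |w' r| ^ p ≤ 0) ∧
      AntitoneOn (fun s => |w' s| ^ p - w s ^ p / p) (Ioi R₀) := by
  have hp0 : 0 < p := lt_trans one_pos hp
  have hp1 : 0 < p - 1 := sub_pos.2 hp
  have hn1 : (0:ℝ) < (n:ℝ) - 1 := by
    have h2 : (2:ℝ) ≤ (n:ℝ) := by exact_mod_cast hn
    linarith
  -- key derivative computation
  have key : ∀ r, R₀ < r →
      HasDerivAt (fun s => |w' s| ^ p - w s ^ p / p)
        ((-w'' r) * p * (-w' r) ^ (p - 1) - w' r * p * w r ^ (p - 1) / p) r := by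
    intro r hr
    have hA : 0 < -w' r := neg_pos.2 (hneg r hr)
    have h1 : HasDerivAt (fun s => (-w' s) ^ p) ((-w'' r) * p * (-w' r) ^ (p - 1)) r :=
      ((hd2 r hr).neg).rpow_const (Or.inl hA.ne')
    have h2 : HasDerivAt (fun s => w s ^ p) (w' r * p * w r ^ (p - 1)) r :=
      (hd1 r hr).rpow_const (Or.inl (hpos r hr).ne')
    have h3 := h1.sub (h2.div_const p)
    apply h3.congr_of_eventuallyEq
    filter_upwards [Ioi_mem_nhds hr] with s hs
    rw [abs_of_neg (hneg s hs)]
    rfl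
  have keyineq : ∀ r, R₀ < r →
      (-w'' r) * p * (-w' r) ^ (p - 1) - w' r * p * w r ^ (p - 1) / p ≤
        -(p * ((n : ℝ) - 1) / ((p - 1) * r)) * |w' r| ^ p := by
    intro r hr
    have hrpos : 0 < r := lt_of_le_of_lt hR₀ hr
    have hA : 0 < -w' r := neg_pos.2 (hneg r hr)
    have hB := hpos r hr
    have habs : |w' r| = -w' r := abs_of_neg (hneg r hr)
    have hode' := hode r hr
    rw [habs] at hode'
    have hK : 0 < (-w' r) ^ (p - 2) := Real.rpow_pos_of_pos hA _
    -- multiply hode' by p * (-w' r)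
    have h4 : p * (-w' r) * (w r ^ (p - 1) / p) ≤
        p * (-w' r) * ((-w' r) ^ (p - 2) * (w'' r + ((n : ℝ) - 1) / (p - 1) * (w' r / r))) := by
      apply mul_le_mul_of_nonneg_left hode'
      positivity
    have hsplit1 : (-w' r) * (-w' r) ^ (p - 2) = (-w' r) ^ (p - 1) := by
      rw [← Real.rpow_one_add' hA.le (by intro h; rw [show (1:ℝ) + (p-2) = p - 1 by ring] at h; rw [h] at hp1; simp at hp1)]
      ring_nf
    have hsplit2 : (-w' r) * (-w' r) ^ (p - 1) = (-w' r) ^ p := by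
      rw [← Real.rpow_one_add' hA.le (by intro h; rw [show (1:ℝ) + (p-1) = p by ring] at h; rw [h] at hp0; simp at hp0)]
      ring_nf
    rw [habs]
    -- from h4: (-w' r) * w r ^ (p-1) ≤ p * (-w' r)^(p-1) * (w'' r + c w'/r)
    have h5 : (-w' r) * w r ^ (p - 1) ≤
        p * (-w' r) ^ (p - 1) * (w'' r + ((n : ℝ) - 1) / (p - 1) * (w' r / r)) := by
      calc (-w' r) * w r ^ (p - 1) = p * (-w' r) * (w r ^ (p - 1) / p) := by
            field_simp
        _ ≤ p * (-w' r) * ((-w' r) ^ (p - 2) * (w'' r + ((n : ℝ) - 1) / (p - 1) * (w' r / r))) := h4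
        _ = p * ((-w' r) * (-w' r) ^ (p - 2)) * (w'' r + ((n : ℝ) - 1) / (p - 1) * (w' r / r)) := by ring
        _ = p * (-w' r) ^ (p - 1) * (w'' r + ((n : ℝ) - 1) / (p - 1) * (w' r / r)) := by rw [hsplit1]
    -- rearrange
    have h6 : (-w'' r) * p * (-w' r) ^ (p - 1) - w' r * p * w r ^ (p - 1) / p ≤
        p * ((n : ℝ) - 1) / (p - 1) * (w' r / r) * (-w' r) ^ (p - 1) := by
      have : w' r * p * w r ^ (p - 1) / p = -((-w' r) * w r ^ (p - 1)) := by
        field_simp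
      rw [this]
      have h5' : (-w' r) * w r ^ (p - 1) ≤
          p * (-w' r) ^ (p - 1) * w'' r + p * ((n : ℝ) - 1) / (p - 1) * (w' r / r) * (-w' r) ^ (p - 1) :=
        h5.trans_eq (by ring)
      linarith
    calc (-w'' r) * p * (-w' r) ^ (p - 1) - w' r * p * w r ^ (p - 1) / p ≤
          p * ((n : ℝ) - 1) / (p - 1) * (w' r / r) * (-w' r) ^ (p - 1) := h6
      _ = -(p * ((n : ℝ) - 1) / ((p - 1) * r)) * ((-w' r) * (-w' r) ^ (p - 1)) := by
          field_simp
      _ = -(p * ((n : ℝ) - 1) / ((p - 1) * r)) * (-w' r) ^ p := by rw [hsplit2]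
  have keynonpos : ∀ r, R₀ < r → -(p * ((n : ℝ) - 1) / ((p - 1) * r)) * |w' r| ^ p ≤ 0 := by
    intro r hr
    have hrpos : 0 < r := lt_of_le_of_lt hR₀ hr
    have hA : 0 < |w' r| := abs_pos.2 (hneg r hr).ne
    have h1 : 0 < |w' r| ^ p := Real.rpow_pos_of_pos hA _
    have h2 : 0 < p * ((n : ℝ) - 1) / ((p - 1) * r) := by positivity
    nlinarith
  refine ⟨fun r hr => ⟨?_, keynonpos r hr⟩, ?_⟩
  · rw [(key r hr).deriv]
    exact keyineq r hr
  · apply antitoneOn_of_deriv_nonpos (convex_Ioi R₀)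
    · intro x hx
      exact ((key x hx).differentiableAt).continuousAt.continuousWithinAt
    · rw [interior_Ioi]
      intro x hx
      exact (key x hx).differentiableAt.differentiableWithinAt
    · rw [interior_Ioi]
      intro x hx
      rw [(key x hx).deriv]
      exact (keyineq x hx).trans (keynonpos x hx)
end

section
/- Let n ≥ 2 be an integer and p > 1. Let R₀ ≥ 0 and let w ∈ C²((R₀,∞)) satisfy w(r) > 0 and w'(r) < 0 for all r > R₀, the differential inequality |w'(r)|^{p−2}·(w''(r) + ((n−1)/(p−1))·w'(r)/r) ≥ w(r)^{p−1}/p for all r > R₀, and w(r) → 0 as r → ∞. Then ψ(r) = |w'(r)|^p − w(r)^p/p satisfies ψ(r) ≥ 0 for all r > R₀, equivalently w'(r) + p^{−1/p}·w(r) ≤ 0 for all r > R₀; consequently w(r) ≤ w(R)·e^{−p^{−1/p}(r−R)} for all R₀ < R ≤ r. -/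
open Set Filter

private lemma antiOnIoi {f f' : ℝ → ℝ} {A : ℝ}
    (hd : ∀ r, A < r → HasDerivAt f (f' r) r) (hle : ∀ r, A < r → f' r ≤ 0) :
    AntitoneOn f (Ioi A) := by
  apply antitoneOn_of_deriv_nonpos (convex_Ioi A)
  · exact fun r hr => (hd r hr).continuousAt.continuousWithinAt
  · intro r hr
    rw [interior_Ioi] at hr
    exact (hd r hr).differentiableAt.differentiableWithinAt
  · intro r hr
    rw [interior_Ioi] at hr
    rw [(hd r hr).deriv]
    exact hle r hr

/-- Let `n ≥ 2`, `p > 1`, `R₀ ≥ 0` and let `w ∈ C²((R₀,∞))` satisfy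
`w > 0`, `w' < 0`, the differential inequality
`|w'|^{p−2}·(w'' + ((n−1)/(p−1))·w'/r) ≥ w^{p−1}/p` on `(R₀,∞)`, and `w(r) → 0`
as `r → ∞`.  Then `ψ(r) = |w'(r)|^p − w(r)^p/p ≥ 0` for all `r > R₀`, equivalently
`w'(r) + p^{−1/p}·w(r) ≤ 0`; consequently
`w(r) ≤ w(R)·e^{−p^{−1/p}(r−R)}` for all `R₀ < R ≤ r`. -/
theorem statement10 (n : ℕ) (hn : 2 ≤ n) (p : ℝ) (hp : 1 < p) (R₀ : ℝ) (hR₀ : 0 ≤ R₀)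
    (w w' w'' : ℝ → ℝ)
    (hd1 : ∀ r, R₀ < r → HasDerivAt w (w' r) r)
    (hd2 : ∀ r, R₀ < r → HasDerivAt w' (w'' r) r)
    (hpos : ∀ r, R₀ < r → 0 < w r)
    (hneg : ∀ r, R₀ < r → w' r < 0)
    (hode : ∀ r, R₀ < r →
      w r ^ (p - 1) / p ≤ |w' r| ^ (p - 2) * (w'' r + ((n : ℝ) - 1) / (p - 1) * (w' r / r)))
    (hdecay : Tendsto w atTop (nhds 0)) :
    (∀ r, R₀ < r →
        0 ≤ |w' r| ^ p - w r ^ p / p ∧ w' r + p ^ (-p⁻¹) * w r ≤ 0) ∧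
      ∀ R r, R₀ < R → R ≤ r → w r ≤ w R * Real.exp (-(p ^ (-p⁻¹)) * (r - R)) := by
  have hp0 : (0:ℝ) < p := lt_trans one_pos hp
  set a : ℝ := p ^ (-p⁻¹) with ha_def
  have ha : 0 < a := Real.rpow_pos_of_pos hp0 _
  have hap : a ^ p = p⁻¹ := by
    rw [ha_def, ← Real.rpow_mul hp0.le, show -p⁻¹ * p = -1 by field_simp]
    exact Real.rpow_neg_one p
  set ψ : ℝ → ℝ := fun r => (-(w' r)) ^ p - w r ^ p / p with hψ_def
  -- derivative of ψ
  have habs : ∀ r, R₀ < r → |w' r| = -(w' r) := fun r hr => abs_of_neg (hneg r hr)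
  have hψd : ∀ r, R₀ < r → HasDerivAt ψ
      ((-(w'' r)) * p * (-(w' r)) ^ (p - 1) - (w' r * p * w r ^ (p - 1)) / p) r := by
    intro r hr
    exact (((hd2 r hr).neg).rpow_const (Or.inl (neg_ne_zero.mpr (hneg r hr).ne))).sub
      (((hd1 r hr).rpow_const (Or.inl (hpos r hr).ne')).div_const p)
  -- ψ' ≤ 0
  have hψ'le : ∀ r, R₀ < r →
      (-(w'' r)) * p * (-(w' r)) ^ (p - 1) - (w' r * p * w r ^ (p - 1)) / p ≤ 0 := by
    intro r hr
    have hr0 : 0 < r := lt_of_le_of_lt hR₀ hr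
    have hu : 0 < -(w' r) := neg_pos.mpr (hneg r hr)
    have hupow : (0:ℝ) ≤ (-(w' r)) ^ (p - 2) := Real.rpow_nonneg hu.le _
    have hc : (0:ℝ) ≤ ((n : ℝ) - 1) / (p - 1) := by
      apply div_nonneg
      · have : (2:ℝ) ≤ (n:ℝ) := by exact_mod_cast hn
        linarith
      · linarith
    have hode' := hode r hr
    rw [habs r hr] at hode'
    -- w^{p-1}/p ≤ u^{p-2} w''
    have hkey : w r ^ (p - 1) / p ≤ (-(w' r)) ^ (p - 2) * w'' r := by
      have h1 : ((n : ℝ) - 1) / (p - 1) * (w' r / r) ≤ 0 :=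
        mul_nonpos_of_nonneg_of_nonpos hc (div_nonpos_of_nonpos_of_nonneg (hneg r hr).le hr0.le)
      nlinarith [mul_nonneg hupow (neg_nonneg.mpr h1)]
    -- rewrite u^{p-1} = u * u^{p-2}
    have hsplit : (-(w' r)) ^ (p - 1) = (-(w' r)) * (-(w' r)) ^ (p - 2) := by
      rw [show p - 1 = 1 + (p - 2) by ring, Real.rpow_add hu, Real.rpow_one]
    rw [hsplit]
    have hb : 0 ≤ p * ((-(w' r)) ^ (p - 2) * w'' r) - w r ^ (p - 1) := by
      have := mul_le_mul_of_nonneg_left hkey hp0.le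
      rw [mul_div_cancel₀ _ hp0.ne'] at this
      linarith
    have hwp : (w' r * p * w r ^ (p - 1)) / p = w' r * w r ^ (p - 1) := by
      field_simp
    rw [hwp]
    nlinarith [hneg r hr]
  have hψanti : AntitoneOn ψ (Ioi R₀) := antiOnIoi hψd hψ'le
  -- ψ ≥ 0
  have hψ0 : ∀ r, R₀ < r → 0 ≤ ψ r := by
    intro r hr
    by_contra hcon
    push_neg at hcon
    have htend : Tendsto (fun s => w s ^ p / p) atTop (nhds 0) := by
      have := (hdecay.rpow_const (Or.inr hp0.le)).div_const p
      simpa [Real.zero_rpow hp0.ne'] using this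
    have hev : ∀ᶠ s in atTop, w s ^ p / p < -ψ r :=
      htend.eventually (gt_mem_nhds (by linarith))
    obtain ⟨s, hps, hrs⟩ := (hev.and (eventually_ge_atTop r)).exists
    have hsR : R₀ < s := lt_of_lt_of_le hr hrs
    have h1 : ψ s ≤ ψ r := hψanti (mem_Ioi.mpr hr) (mem_Ioi.mpr hsR) hrs
    have h2 : 0 < (-(w' s)) ^ p := Real.rpow_pos_of_pos (neg_pos.mpr (hneg s hsR)) _
    have h3 : (-(w' s)) ^ p - w s ^ p / p ≤ ψ r := h1
    linarith
  -- first conclusion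
  have hmain : ∀ r, R₀ < r → w' r + a * w r ≤ 0 := by
    intro r hr
    have h : 0 ≤ (-(w' r)) ^ p - w r ^ p / p := hψ0 r hr
    have hw := hpos r hr
    have hu : 0 < -(w' r) := neg_pos.mpr (hneg r hr)
    have hineq : (a * w r) ^ p ≤ (-(w' r)) ^ p := by
      rw [Real.mul_rpow ha.le hw.le, hap, inv_mul_eq_div]
      linarith
    have := (Real.rpow_le_rpow_iff (by positivity) hu.le hp0).mp hineq
    linarith
  refine ⟨fun r hr => ⟨by rw [habs r hr]; exact hψ0 r hr, hmain r hr⟩, ?_⟩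
  intro R r hR hRr
  set g : ℝ → ℝ := fun s => w s * Real.exp (a * s) with hg_def
  have hgd : ∀ s, R₀ < s → HasDerivAt g
      ((w' s + a * w s) * Real.exp (a * s)) s := by
    intro s hs
    have he : HasDerivAt (fun s => Real.exp (a * s)) (Real.exp (a * s) * a) s := by
      simpa using ((hasDerivAt_id s).const_mul a).exp
    have : HasDerivAt (fun y => w y * Real.exp (a * y))
        (w' s * Real.exp (a * s) + w s * (Real.exp (a * s) * a)) s := (hd1 s hs).mul he
    convert this using 1
    ring
  have hg'le : ∀ s, R₀ < s → (w' s + a * w s) * Real.exp (a * s) ≤ 0 := fun s hs =>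
    mul_nonpos_of_nonpos_of_nonneg (hmain s hs) (Real.exp_nonneg _)
  have hganti : AntitoneOn g (Ioi R₀) := antiOnIoi hgd hg'le
  have h1 : g r ≤ g R := hganti (mem_Ioi.mpr hR) (mem_Ioi.mpr (lt_of_lt_of_le hR hRr)) hRr
  have h2 : w r * Real.exp (a * r) ≤ w R * Real.exp (a * R) := h1
  have hepos : (0:ℝ) < Real.exp (a * r) := Real.exp_pos _
  have h3 : w r ≤ w R * Real.exp (a * R) / Real.exp (a * r) := by
    rw [le_div_iff₀ hepos]; exact h2
  rw [show -a * (r - R) = a * R - a * r by ring, Real.exp_sub, ← mul_div_assoc]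
  exact h3
end

section
/- Let Ω' ⊆ ℝⁿ be a bounded open set, s̄ > 0, 1 < p < q, and let η ∈ C¹((0,∞)) with η' > 0. Let u : (closure of Ω') × [0,T] → (0,∞) be such that u, its spatial gradient Du, its time derivative u_t, and ∂_t(Du) are continuous on (closure of Ω') × [0,T], and u(·,t) ∈ C²(Ω') for each t. Set A(t) = ∫_{Ω'}((s̄+|Du|²)^{p/2} + u^p) dy, B(t) = ∫_{Ω'} u^q dy, and ℰ(t) = η(A(t))/B(t)^{p/q}. Assume that on Ω'×(0,T) the function u satisfies u_t = div((s̄+|Du|²)^{(p−2)/2}Du) + (η(A(t))/(η'(A(t))·B(t)))·u^{q−1} − u^{p−1}, and that for each t ∈ (0,T) the integration-by-parts identity ∫_{Ω'}(s̄+|Du|²)^{(p−2)/2}⟨Du, D(u_t)⟩ dy = −∫_{Ω'} div((s̄+|Du|²)^{(p−2)/2}Du)·u_t dy holds (this encodes the Neumann boundary condition u_ν = 0 on ∂Ω'). Then for every t ∈ (0,T), ℰ'(t) = −(p·η'(A(t))/B(t)^{p/q})·∫_{Ω'} u_t² dy ≤ 0; in particular ℰ is nonincreasing, i.e. the parabolic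 equation is a descent gradient flow for the functional ℰ. -/
open MeasureTheory Metric Set Filter

noncomputable section

/-- `ℝⁿ` as a Euclidean space. -/
abbrev Euc (n : ℕ) := EuclideanSpace ℝ (Fin n)

/-- The divergence of a vector field `F : ℝⁿ → ℝⁿ`, as the trace of its derivative. -/
def vdiv (n : ℕ) (F : Euc n → Euc n) (x : Euc n) : ℝ :=
  LinearMap.trace ℝ (Euc n) (fderiv ℝ F x).toLinearMap

lemma aux_int {n : ℕ} {Ω' : Set (Euc n)} (hΩb : Bornology.IsBounded Ω')
    {f : Euc n → ℝ} (hf : ContinuousOn f (closure Ω')) : IntegrableOn f Ω' volume :=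
  (hf.integrableOn_compact hΩb.isCompact_closure).mono_set subset_closure

lemma aux_param {n : ℕ} {Ω' : Set (Euc n)} (hΩo : IsOpen Ω') (hΩb : Bornology.IsBounded Ω')
    {T : ℝ} (F F' : ℝ → Euc n → ℝ)
    (hFc : ContinuousOn (fun P : ℝ × Euc n => F P.1 P.2) (Icc 0 T ×ˢ closure Ω'))
    (hF'c : ContinuousOn (fun P : ℝ × Euc n => F' P.1 P.2) (Icc 0 T ×ˢ closure Ω'))
    (hd : ∀ t ∈ Icc (0:ℝ) T, ∀ y ∈ closure Ω', HasDerivAt (fun s => F s y) (F' t y) t) :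
    (∀ t ∈ Ioo (0:ℝ) T, HasDerivAt (fun s => ∫ y in Ω', F s y) (∫ y in Ω', F' t y) t) ∧
    ContinuousOn (fun s => ∫ y in Ω', F s y) (Icc 0 T) := by
  have hKc : IsCompact ((Icc (0:ℝ) T) ×ˢ closure Ω') :=
    isCompact_Icc.prod hΩb.isCompact_closure
  haveI : IsFiniteMeasure (volume.restrict Ω') :=
    ⟨by rw [Measure.restrict_apply_univ]; exact hΩb.measure_lt_top⟩
  obtain ⟨C, hC⟩ := hKc.exists_bound_of_continuousOn hF'c
  obtain ⟨C₀, hC₀⟩ := hKc.exists_bound_of_continuousOn hFc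
  have hsub : ∀ s ∈ Icc (0:ℝ) T, ∀ y ∈ Ω', (s, y) ∈ (Icc (0:ℝ) T) ×ˢ closure Ω' :=
    fun s hs y hy => ⟨hs, subset_closure hy⟩
  have hmeas : ∀ s ∈ Icc (0:ℝ) T, AEStronglyMeasurable (F s) (volume.restrict Ω') := by
    intro s hs
    have : ContinuousOn (F s) Ω' := by
      refine (hFc.comp ((continuous_const.prodMk continuous_id).continuousOn) ?_)
      exact fun y hy => hsub s hs y hy
    exact this.aestronglyMeasurable hΩo.measurableSet
  have hmeas' : ∀ s ∈ Icc (0:ℝ) T, AEStronglyMeasurable (F' s) (volume.restrict Ω') := by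
    intro s hs
    have : ContinuousOn (F' s) Ω' := by
      refine (hF'c.comp ((continuous_const.prodMk continuous_id).continuousOn) ?_)
      exact fun y hy => hsub s hs y hy
    exact this.aestronglyMeasurable hΩo.measurableSet
  have hFint : ∀ s ∈ Icc (0:ℝ) T, Integrable (F s) (volume.restrict Ω') := by
    intro s hs
    refine (integrable_const C₀).mono' (hmeas s hs) ?_
    refine ae_restrict_of_forall_mem hΩo.measurableSet fun y hy => ?_
    exact hC₀ (s, y) (hsub s hs y hy)
  constructor
  · intro t ht
    set ε := min t (T - t) with hε
    have hεpos : 0 < ε := lt_min ht.1 (by linarith [ht.2])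
    have hball : ball t ε ⊆ Icc 0 T := by
      intro s hs
      rw [mem_ball, Real.dist_eq, abs_lt] at hs
      have h1 : min t (T - t) ≤ t := min_le_left _ _
      have h2 : min t (T - t) ≤ T - t := min_le_right _ _
      have h3 := hs.1; have h4 := hs.2
      exact ⟨by simp only [hε] at h3 h4 ⊢; linarith, by simp only [hε] at h3 h4 ⊢; linarith⟩
    have main := hasDerivAt_integral_of_dominated_loc_of_deriv_le (μ := volume.restrict Ω')
      (F := F) (F' := F') (bound := fun _ => C) (ball_mem_nhds t hεpos)
      (Filter.eventually_of_mem (ball_mem_nhds t hεpos) (fun s hs => hmeas s (hball hs)))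
      (hFint t (hball (mem_ball_self hεpos)))
      (hmeas' t (hball (mem_ball_self hεpos)))
      (ae_restrict_of_forall_mem hΩo.measurableSet fun y hy s hs =>
        hC (s, y) (hsub s (hball hs) y hy))
      (integrable_const C)
      (ae_restrict_of_forall_mem hΩo.measurableSet fun y hy s hs =>
        hd s (hball hs) y (subset_closure hy))
    exact main.2
  · refine continuousOn_of_dominated (bound := fun _ => C₀) hmeas ?_ (integrable_const C₀) ?_
    · intro s hs
      refine ae_restrict_of_forall_mem hΩo.measurableSet fun y hy => ?_
      exact hC₀ (s, y) (hsub s hs y hy)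
    · refine ae_restrict_of_forall_mem hΩo.measurableSet fun y hy => ?_
      refine hFc.comp ((continuous_id.prodMk continuous_const).continuousOn) ?_
      exact fun s hs => ⟨hs, subset_closure hy⟩


/-- the parabolic equation
`u_t = div((s̄+|Du|²)^{(p−2)/2}Du) + (η(A)/(η'(A)B))u^{q−1} − u^{p−1}` with Neumann
boundary condition (encoded by the integration-by-parts hypothesis) is a descent
gradient flow for `ℰ(t) = η(A(t))/B(t)^{p/q}`, where
`A(t) = ∫_{Ω'}((s̄+|Du|²)^{p/2}+u^p)` and `B(t) = ∫_{Ω'}u^q`: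
`ℰ'(t) = −(p·η'(A(t))/B(t)^{p/q})·∫_{Ω'}u_t² ≤ 0`, so `ℰ` is nonincreasing. -/
theorem statement16 (n : ℕ)
    (Ω' : Set (Euc n)) (hΩo : IsOpen Ω') (hΩb : Bornology.IsBounded Ω') (hΩne : Ω'.Nonempty)
    (sbar p q : ℝ) (hs : 0 < sbar) (hp : 1 < p) (hpq : p < q)
    (η : ℝ → ℝ) (hη : ContDiffOn ℝ 1 η (Ioi 0)) (hη' : ∀ t > (0 : ℝ), 0 < deriv η t)
    (T : ℝ) (hT : 0 < T)
    (u ut : ℝ → Euc n → ℝ) (Dut : ℝ → Euc n → Euc n)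
    (hpos : ∀ t ∈ Icc 0 T, ∀ x ∈ closure Ω', 0 < u t x)
    (hC2 : ∀ t ∈ Icc 0 T, ContDiffOn ℝ 2 (u t) Ω')
    (hut : ∀ t ∈ Icc 0 T, ∀ x ∈ closure Ω', HasDerivAt (fun s => u s x) (ut t x) t)
    (hDut : ∀ t ∈ Icc 0 T, ∀ x ∈ closure Ω',
      HasDerivAt (fun s => gradient (u s) x) (Dut t x) t)
    (hcont : ContinuousOn
      (fun P : ℝ × Euc n => (u P.1 P.2, gradient (u P.1) P.2, ut P.1 P.2, Dut P.1 P.2))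
      (Icc 0 T ×ˢ closure Ω'))
    (A B : ℝ → ℝ)
    (hA : ∀ t, A t = ∫ y in Ω', ((sbar + ‖gradient (u t) y‖ ^ 2) ^ (p / 2) + u t y ^ p))
    (hB : ∀ t, B t = ∫ y in Ω', u t y ^ q)
    (hApos : ∀ t ∈ Icc 0 T, 0 < A t) (hBpos : ∀ t ∈ Icc 0 T, 0 < B t)
    (hPDE : ∀ t ∈ Ioo 0 T, ∀ x ∈ Ω',
      ut t x =
        vdiv n (fun y => ((sbar + ‖gradient (u t) y‖ ^ 2) ^ ((p - 2) / 2)) •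
          gradient (u t) y) x +
        (η (A t) / (deriv η (A t) * B t)) * u t x ^ (q - 1) - u t x ^ (p - 1))
    (hIBP : ∀ t ∈ Ioo 0 T,
      ∫ y in Ω', (sbar + ‖gradient (u t) y‖ ^ 2) ^ ((p - 2) / 2) *
          (inner ℝ (gradient (u t) y) (Dut t y) : ℝ) =
        -∫ y in Ω', vdiv n (fun z => ((sbar + ‖gradient (u t) z‖ ^ 2) ^ ((p - 2) / 2)) •
            gradient (u t) z) y * ut t y) :
    (∀ t ∈ Ioo 0 T,
      HasDerivAt (fun s => η (A s) / B s ^ (p / q))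
        (-(p * deriv η (A t) / B t ^ (p / q)) * ∫ y in Ω', (ut t y) ^ 2) t ∧
      -(p * deriv η (A t) / B t ^ (p / q)) * (∫ y in Ω', (ut t y) ^ 2) ≤ 0) ∧
    AntitoneOn (fun s => η (A s) / B s ^ (p / q)) (Icc 0 T) := by
  classical
  set K := (Icc (0:ℝ) T) ×ˢ closure Ω' with hK
  -- continuity of the four fields on K
  have huc : ContinuousOn (fun P : ℝ × Euc n => u P.1 P.2) K :=
    (continuous_fst.comp_continuousOn hcont : _)
  have hgc : ContinuousOn (fun P : ℝ × Euc n => gradient (u P.1) P.2) K :=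
    ((continuous_fst.comp continuous_snd).comp_continuousOn hcont : _)
  have hutc : ContinuousOn (fun P : ℝ × Euc n => ut P.1 P.2) K :=
    ((continuous_fst.comp (continuous_snd.comp continuous_snd)).comp_continuousOn hcont : _)
  have hDutc : ContinuousOn (fun P : ℝ × Euc n => Dut P.1 P.2) K :=
    ((continuous_snd.comp (continuous_snd.comp continuous_snd)).comp_continuousOn hcont : _)
  have slice : ∀ (f : ℝ × Euc n → ℝ), ContinuousOn f K → ∀ t ∈ Icc (0:ℝ) T,
      ContinuousOn (fun y => f (t, y)) (closure Ω') := by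
    intro f hf t ht
    exact hf.comp ((continuous_const.prodMk continuous_id).continuousOn)
      (fun y hy => ⟨ht, hy⟩)
  -- z = sbar + |Du|^2
  have hzc : ContinuousOn (fun P : ℝ × Euc n => sbar + ‖gradient (u P.1) P.2‖ ^ 2) K :=
    continuousOn_const.add (hgc.norm.pow 2)
  have hzpos : ∀ P ∈ K, 0 < sbar + ‖gradient (u P.1) P.2‖ ^ 2 := by
    intro P hP; positivity
  -- the basic integrand pieces
  have hG1c : ContinuousOn (fun P : ℝ × Euc n =>
      (sbar + ‖gradient (u P.1) P.2‖ ^ 2) ^ ((p - 2) / 2) *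
        (inner ℝ (gradient (u P.1) P.2) (Dut P.1 P.2) : ℝ)) K :=
    (hzc.rpow_const (fun P hP => Or.inl (hzpos P hP).ne')).mul (hgc.inner hDutc)
  have hG2c : ContinuousOn (fun P : ℝ × Euc n => u P.1 P.2 ^ (p - 1) * ut P.1 P.2) K :=
    (huc.rpow_const (fun P hP => Or.inl (hpos P.1 hP.1 P.2 hP.2).ne')).mul hutc
  have hG3c : ContinuousOn (fun P : ℝ × Euc n => u P.1 P.2 ^ (q - 1) * ut P.1 P.2) K :=
    (huc.rpow_const (fun P hP => Or.inl (hpos P.1 hP.1 P.2 hP.2).ne')).mul hutc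
  have hutsqc : ContinuousOn (fun P : ℝ × Euc n => ut P.1 P.2 ^ 2) K := hutc.pow 2
  -- A-integrand and its time-derivative
  have hFAc : ContinuousOn (fun P : ℝ × Euc n =>
      (sbar + ‖gradient (u P.1) P.2‖ ^ 2) ^ (p / 2) + u P.1 P.2 ^ p) K :=
    (hzc.rpow_const (fun P hP => Or.inl (hzpos P hP).ne')).add
      (huc.rpow_const (fun P hP => Or.inl (hpos P.1 hP.1 P.2 hP.2).ne'))
  have hFA'c : ContinuousOn (fun P : ℝ × Euc n =>
      p * ((sbar + ‖gradient (u P.1) P.2‖ ^ 2) ^ ((p - 2) / 2) *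
        (inner ℝ (gradient (u P.1) P.2) (Dut P.1 P.2) : ℝ)) +
      p * (u P.1 P.2 ^ (p - 1) * ut P.1 P.2)) K :=
    (continuousOn_const.mul hG1c).add (continuousOn_const.mul hG2c)
  have hFBc : ContinuousOn (fun P : ℝ × Euc n => u P.1 P.2 ^ q) K :=
    huc.rpow_const (fun P hP => Or.inl (hpos P.1 hP.1 P.2 hP.2).ne')
  have hFB'c : ContinuousOn (fun P : ℝ × Euc n =>
      q * (u P.1 P.2 ^ (q - 1) * ut P.1 P.2)) K :=
    continuousOn_const.mul hG3c
  -- pointwise time derivatives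
  have hdA : ∀ t ∈ Icc (0:ℝ) T, ∀ y ∈ closure Ω',
      HasDerivAt (fun s => (sbar + ‖gradient (u s) y‖ ^ 2) ^ (p / 2) + u s y ^ p)
        (p * ((sbar + ‖gradient (u t) y‖ ^ 2) ^ ((p - 2) / 2) *
          (inner ℝ (gradient (u t) y) (Dut t y) : ℝ)) +
         p * (u t y ^ (p - 1) * ut t y)) t := by
    intro t ht y hy
    have hgd := hDut t ht y hy
    have hud := hut t ht y hy
    have hzpos' : (0:ℝ) < sbar + ‖gradient (u t) y‖ ^ 2 := by positivity
    have hz : HasDerivAt (fun s => sbar + ‖gradient (u s) y‖ ^ 2)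
        (2 * (inner ℝ (gradient (u t) y) (Dut t y) : ℝ)) t := by
      have h1 := (hasDerivAt_const t sbar).add (HasDerivAt.inner ℝ hgd hgd)
      simp only [real_inner_self_eq_norm_sq] at h1
      refine HasDerivAt.congr_deriv h1 ?_
      rw [real_inner_comm (Dut t y) (gradient (u t) y)]
      ring
    have hzp := hz.rpow_const (p := p / 2) (Or.inl hzpos'.ne')
    have hup := hud.rpow_const (p := p) (Or.inl (hpos t ht y hy).ne')
    have := hzp.add hup
    refine HasDerivAt.congr_deriv this ?_
    rw [show p / 2 - 1 = (p - 2) / 2 by ring]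
    ring
  have hdB : ∀ t ∈ Icc (0:ℝ) T, ∀ y ∈ closure Ω',
      HasDerivAt (fun s => u s y ^ q) (q * (u t y ^ (q - 1) * ut t y)) t := by
    intro t ht y hy
    have hud := hut t ht y hy
    have := hud.rpow_const (p := q) (Or.inl (hpos t ht y hy).ne')
    convert this using 1; ring
  -- apply the parametric lemma
  obtain ⟨hAder, hAcont0⟩ := aux_param hΩo hΩb
    (fun s y => (sbar + ‖gradient (u s) y‖ ^ 2) ^ (p / 2) + u s y ^ p)
    (fun t y => p * ((sbar + ‖gradient (u t) y‖ ^ 2) ^ ((p - 2) / 2) *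
      (inner ℝ (gradient (u t) y) (Dut t y) : ℝ)) + p * (u t y ^ (p - 1) * ut t y))
    hFAc hFA'c hdA
  obtain ⟨hBder, hBcont0⟩ := aux_param hΩo hΩb
    (fun s y => u s y ^ q) (fun t y => q * (u t y ^ (q - 1) * ut t y)) hFBc hFB'c hdB
  have hAeq : A = fun s => ∫ y in Ω', ((sbar + ‖gradient (u s) y‖ ^ 2) ^ (p / 2) + u s y ^ p) :=
    funext hA
  have hBeq : B = fun s => ∫ y in Ω', u s y ^ q := funext hB
  have hAcont : ContinuousOn A (Icc 0 T) := by rw [hAeq]; exact hAcont0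
  have hBcont : ContinuousOn B (Icc 0 T) := by rw [hBeq]; exact hBcont0
  -- main derivative computation
  have key : ∀ t ∈ Ioo (0:ℝ) T,
      HasDerivAt (fun s => η (A s) / B s ^ (p / q))
        (-(p * deriv η (A t) / B t ^ (p / q)) * ∫ y in Ω', (ut t y) ^ 2) t := by
    intro t ht
    have htI : t ∈ Icc (0:ℝ) T := Ioo_subset_Icc_self ht
    have hbpos : 0 < B t := hBpos t htI
    have hapos : 0 < A t := hApos t htI
    have hη'pos : 0 < deriv η (A t) := hη' (A t) hapos
    set c : ℝ := η (A t) / (deriv η (A t) * B t) with hc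
    -- integrability of pieces
    have hI1 : IntegrableOn (fun y => (sbar + ‖gradient (u t) y‖ ^ 2) ^ ((p - 2) / 2) *
        (inner ℝ (gradient (u t) y) (Dut t y) : ℝ)) Ω' volume :=
      aux_int hΩb (slice _ hG1c t htI)
    have hI2 : IntegrableOn (fun y => u t y ^ (p - 1) * ut t y) Ω' volume :=
      aux_int hΩb (slice _ hG2c t htI)
    have hI3 : IntegrableOn (fun y => u t y ^ (q - 1) * ut t y) Ω' volume :=
      aux_int hΩb (slice _ hG3c t htI)
    have hIsq : IntegrableOn (fun y => ut t y ^ 2) Ω' volume :=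
      aux_int hΩb (slice _ hutsqc t htI)
    set I2 : ℝ := ∫ y in Ω', ut t y ^ 2 with hI2def
    set Iq : ℝ := ∫ y in Ω', u t y ^ (q - 1) * ut t y with hIqdef
    set Ip : ℝ := ∫ y in Ω', u t y ^ (p - 1) * ut t y with hIpdef
    set J : ℝ := ∫ y in Ω', (sbar + ‖gradient (u t) y‖ ^ 2) ^ ((p - 2) / 2) *
      (inner ℝ (gradient (u t) y) (Dut t y) : ℝ) with hJdef
    -- J = -(I2 - c Iq + Ip)
    have hJ : J = -(I2 - c * Iq + Ip) := by
      rw [hJdef, hIBP t ht]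
      congr 1
      have : ∀ y ∈ Ω', vdiv n (fun z => ((sbar + ‖gradient (u t) z‖ ^ 2) ^ ((p - 2) / 2)) •
          gradient (u t) z) y * ut t y
          = ut t y ^ 2 - c * (u t y ^ (q - 1) * ut t y) + u t y ^ (p - 1) * ut t y := by
        intro y hy
        have h := hPDE t ht y hy
        have hdivv : vdiv n (fun z => ((sbar + ‖gradient (u t) z‖ ^ 2) ^ ((p - 2) / 2)) •
            gradient (u t) z) y = ut t y - c * u t y ^ (q - 1) + u t y ^ (p - 1) := by
          rw [hc]; linarith [h]
        rw [hdivv]; ring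
      rw [setIntegral_congr_fun hΩo.measurableSet this]
      have ha : IntegrableOn (fun y => ut t y ^ 2 - c * (u t y ^ (q - 1) * ut t y)) Ω' volume :=
        hIsq.sub (hI3.const_mul c)
      have hb : IntegrableOn (fun y => c * (u t y ^ (q - 1) * ut t y)) Ω' volume :=
        hI3.const_mul c
      rw [integral_add ha hI2, integral_sub hIsq hb, integral_const_mul]
    -- derivative of A and B
    have hAt : HasDerivAt A (p * J + p * Ip) t := by
      have h := hAder t ht
      rw [← hAeq] at h
      have : (∫ y in Ω', (p * ((sbar + ‖gradient (u t) y‖ ^ 2) ^ ((p - 2) / 2) *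
          (inner ℝ (gradient (u t) y) (Dut t y) : ℝ)) + p * (u t y ^ (p - 1) * ut t y)))
          = p * J + p * Ip := by
        rw [integral_add (hI1.const_mul p) (hI2.const_mul p), integral_const_mul,
          integral_const_mul]
      rwa [this] at h
    have hBt : HasDerivAt B (q * Iq) t := by
      have h := hBder t ht
      rw [← hBeq] at h
      have : (∫ y in Ω', q * (u t y ^ (q - 1) * ut t y)) = q * Iq := integral_const_mul _ _
      rwa [this] at h
    -- assemble
    have hηd : HasDerivAt η (deriv η (A t)) (A t) :=
      (((hη.differentiableOn one_ne_zero).differentiableAt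
        (isOpen_Ioi.mem_nhds hapos)).hasDerivAt)
    have hcompA : HasDerivAt (fun s => η (A s)) (deriv η (A t) * (p * J + p * Ip)) t :=
      hηd.comp t hAt
    have hBrp : HasDerivAt (fun s => B s ^ (p / q))
        (q * Iq * (p / q) * B t ^ (p / q - 1)) t :=
      hBt.rpow_const (Or.inl hbpos.ne')
    have hbp : (0:ℝ) < B t ^ (p / q) := Real.rpow_pos_of_pos hbpos _
    have hE := hcompA.div hBrp hbp.ne'
    refine HasDerivAt.congr_deriv hE ?_
    have hq0 : (0:ℝ) < q := by linarith
    have hbpm : B t ^ (p / q - 1) = B t ^ (p / q) / B t := by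
      rw [Real.rpow_sub hbpos, Real.rpow_one]
    rw [hJ, hbpm, hc]
    field_simp
    ring
  refine ⟨fun t ht => ⟨key t ht, ?_⟩, ?_⟩
  · have htI : t ∈ Icc (0:ℝ) T := Ioo_subset_Icc_self ht
    have hIsqnn : (0:ℝ) ≤ ∫ y in Ω', ut t y ^ 2 :=
      setIntegral_nonneg hΩo.measurableSet (fun y _ => sq_nonneg _)
    have hcoe : (0:ℝ) < p * deriv η (A t) / B t ^ (p / q) :=
      div_pos (mul_pos (by linarith) (hη' (A t) (hApos t htI)))
        (Real.rpow_pos_of_pos (hBpos t htI) _)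
    have := mul_nonneg hcoe.le hIsqnn
    linarith
  · have hcontE : ContinuousOn (fun s => η (A s) / B s ^ (p / q)) (Icc 0 T) := by
      refine ContinuousOn.div ?_ ?_ ?_
      · exact hη.continuousOn.comp hAcont (fun s hs => hApos s hs)
      · exact hBcont.rpow_const (fun s hs => Or.inl (hBpos s hs).ne')
      · exact fun s hs => (Real.rpow_pos_of_pos (hBpos s hs) _).ne'
    refine antitoneOn_of_deriv_nonpos (convex_Icc 0 T) hcontE ?_ ?_
    · rw [interior_Icc]
      exact fun x hx => ((key x hx).differentiableAt).differentiableWithinAt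
    · rw [interior_Icc]
      intro x hx
      rw [(key x hx).deriv]
      have htI : x ∈ Icc (0:ℝ) T := Ioo_subset_Icc_self hx
      have hIsqnn : (0:ℝ) ≤ ∫ y in Ω', ut x y ^ 2 :=
        setIntegral_nonneg hΩo.measurableSet (fun y _ => sq_nonneg _)
      have hcoe : (0:ℝ) < p * deriv η (A x) / B x ^ (p / q) :=
        div_pos (mul_pos (by linarith) (hη' (A x) (hApos x htI)))
          (Real.rpow_pos_of_pos (hBpos x htI) _)
      have := mul_nonneg hcoe.le hIsqnn
      linarith
end
end
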